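/- arXiv:2002.11154 — 6 statements merged into one kernel-verified Lean document; each statement's English description precedes it below -/
import Mathlib

section
/- For j = 1,…,p let (M_j,d_j) be a proper geodesic metric space with an almost geodesic sequence (y_j^n) converging pointwise (via h_{y_j^n}) to a Busemann point h_j with basepoint y_j^0, let J ⊆ {1,…,p} be non-empty, and let h(x) = max_{j∈J} (h_j(x_j) − α_j) with min_{j∈J} α_j = 0 be the corresponding Busemann point of (∏_{j=1}^p M_j, d_∞) with basepoint y^0. Then the part P(h), equipped with the detour distance δ, contains an isometric copy of (ℝ^J/Sp(𝟏), ‖·‖_var): there is a map ψ from S = {β ∈ ℝ^J : min_{j∈J} β_j = 0} into P(h) such that δ(ψ(β), ψ(β')) = max_{j∈J}(β_j − β'_j) + max_{j∈J}(β'_j − β_j) for all β, β' ∈ S. -/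
open Filter Topology

noncomputable section

/-- `horo b y z = d(z,y) - d(b,y)`, the function `h_y` with basepoint `b`. -/
def horo {M : Type*} [MetricSpace M] (b y z : M) : ℝ := dist z y - dist b y

/-- `HoroLim b y h` : the functions `h_{y^n}` (with basepoint `b`) converge pointwise to `h`. -/
def HoroLim {M : Type*} [MetricSpace M] (b : M) (y : ℕ → M) (h : M → ℝ) : Prop :=
  ∀ z : M, Filter.Tendsto (fun n => horo b (y n) z) Filter.atTop (nhds (h z))

/-- `h` is a horofunction of `(M,d)` with basepoint `b`. -/
def IsHorofunction {M : Type*} [MetricSpace M] (b : M) (h : M → ℝ) : Prop :=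
  (∃ y : ℕ → M, HoroLim b y h) ∧ ∀ y : M, h ≠ horo b y

/-- A metric space is geodesic: any two points are joined by a geodesic path. -/
def IsGeodesicSpace (M : Type*) [MetricSpace M] : Prop :=
  ∀ x y : M, ∃ γ : ℝ → M, γ 0 = x ∧ γ (dist x y) = y ∧
    ∀ s ∈ Set.Icc (0 : ℝ) (dist x y), ∀ t ∈ Set.Icc (0 : ℝ) (dist x y),
      dist (γ s) (γ t) = |s - t|

/-- Almost geodesic sequence. -/
def IsAlmostGeodesicSeq {M : Type*} [MetricSpace M] (y : ℕ → M) : Prop :=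
  Filter.Tendsto (fun n => dist (y n) (y 0)) Filter.atTop Filter.atTop ∧
  ∀ ε > (0 : ℝ), ∃ N : ℕ, ∀ m k : ℕ, N ≤ k → k ≤ m →
    dist (y m) (y k) + dist (y k) (y 0) - dist (y m) (y 0) < ε

/-- A Busemann point: a horofunction that is the limit of an almost geodesic sequence. -/
def IsBusemannPoint {M : Type*} [MetricSpace M] (b : M) (h : M → ℝ) : Prop :=
  IsHorofunction b h ∧ ∃ y : ℕ → M, IsAlmostGeodesicSeq y ∧ HoroLim b y h

/-- Detour cost `H(h₁,h₂)`, with values in `EReal` (so it may be `⊤ = ∞`). -/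
def detourCost {M : Type*} [MetricSpace M] (b : M) (h₁ h₂ : M → ℝ) : EReal :=
  ⨅ z : {z : ℕ → M // HoroLim b z h₁},
    Filter.liminf (fun n => ((dist b (z.1 n) + h₂ (z.1 n) : ℝ) : EReal)) Filter.atTop

/-- Detour distance `δ(h₁,h₂) = H(h₁,h₂) + H(h₂,h₁)`. -/
def detourDist {M : Type*} [MetricSpace M] (b : M) (h₁ h₂ : M → ℝ) : EReal :=
  detourCost b h₁ h₂ + detourCost b h₂ h₁

section SingleSpace

variable {M : Type*} [MetricSpace M]

lemma horo_self (b v : M) : horo b v b = 0 := sub_self _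

lemma horo_lip (b v z z' : M) : horo b v z ≤ horo b v z' + dist z' z := by
  have := dist_triangle z z' v
  simp only [horo]; linarith [dist_comm z z']

lemma neg_dist_le_horo (b v z : M) : -dist b z ≤ horo b v z := by
  have := dist_triangle b z v
  simp only [horo]; linarith

section Seq
variable {y : ℕ → M} {h : M → ℝ}

lemma hlim_lip (hlim : HoroLim (y 0) y h) (z z' : M) : h z ≤ h z' + dist z' z := by
  refine le_of_tendsto_of_tendsto' (hlim z) ((hlim z').add tendsto_const_nhds) ?_
  exact fun n => horo_lip _ _ _ _

lemma hlim_base (hlim : HoroLim (y 0) y h) : h (y 0) = 0 :=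
  tendsto_nhds_unique (hlim (y 0)) (by simpa [horo_self] using tendsto_const_nhds)

lemma hlim_ge (hlim : HoroLim (y 0) y h) (z : M) : -dist (y 0) z ≤ h z := by
  refine ge_of_tendsto (hlim z) (Filter.Eventually.of_forall fun n => ?_)
  exact neg_dist_le_horo _ _ _

/-- Good bundle of almost-geodesic estimates from index `N` on, at scale `ε`. -/
def Good (y : ℕ → M) (h : M → ℝ) (ε : ℝ) (N : ℕ) : Prop :=
  (∀ k m : ℕ, N ≤ k → k ≤ m →
    dist (y m) (y k) + dist (y k) (y 0) - dist (y m) (y 0) < ε) ∧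
  (∀ k, N ≤ k → h (y k) + dist (y 0) (y k) ≤ ε) ∧
  (∀ k, N ≤ k → ∀ z, h z ≤ horo (y 0) (y k) z + ε)

lemma good_mono {ε : ℝ} {N N' : ℕ} (hg : Good y h ε N) (hN : N ≤ N') :
    Good y h ε N' :=
  ⟨fun k m hk => hg.1 k m (hN.trans hk),
   fun k hk => hg.2.1 k (hN.trans hk),
   fun k hk => hg.2.2 k (hN.trans hk)⟩

lemma good_mono_eps {ε ε' : ℝ} {N : ℕ} (hg : Good y h ε N) (hε : ε ≤ ε') :
    Good y h ε' N :=
  ⟨fun k m hk hkm => (hg.1 k m hk hkm).trans_le hε,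
   fun k hk => (hg.2.1 k hk).trans hε,
   fun k hk z => (hg.2.2 k hk z).trans (by linarith)⟩

lemma exists_good (hag : IsAlmostGeodesicSeq y) (hlim : HoroLim (y 0) y h)
    {ε : ℝ} (hε : 0 < ε) : ∃ N, Good y h ε N := by
  obtain ⟨N, hN⟩ := hag.2 (ε/2) (by linarith)
  refine ⟨N, fun k m hk hkm => (hN m k hk hkm).trans_le (by linarith), ?_, ?_⟩
  · intro k hk
    have : ∀ᶠ n in Filter.atTop, horo (y 0) (y n) (y k) ≤ ε/2 - dist (y 0) (y k) := by
      filter_upwards [Filter.eventually_ge_atTop k] with n hn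
      have := hN n k hk hn
      simp only [horo]
      rw [dist_comm (y k) (y n)]
      linarith [dist_comm (y 0) (y k), dist_comm (y 0) (y n)]
    have := le_of_tendsto (hlim (y k)) this
    linarith
  · intro k hk z
    have : ∀ᶠ n in Filter.atTop, horo (y 0) (y n) z ≤ horo (y 0) (y k) z + ε/2 := by
      filter_upwards [Filter.eventually_ge_atTop k] with n hn
      have h1 := hN n k hk hn
      have h2 := dist_triangle z (y k) (y n)
      simp only [horo]
      rw [dist_comm (y n) (y k)] at h1
      linarith [dist_comm (y 0) (y n), dist_comm (y 0) (y k)]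
    have := le_of_tendsto (hlim z) this
    linarith

/-- The key interpolation step: a point `w` approximately at distance `t` from the
basepoint, on a geodesic from `y k` to a far point `y m`. -/
lemma step (hag : IsAlmostGeodesicSeq y) (hlim : HoroLim (y 0) y h)
    (hgeo : IsGeodesicSpace M) {ε t : ℝ} {k : ℕ} (hε : 0 < ε)
    (hg : Good y h ε k) (ht : dist (y 0) (y k) ≤ t) :
    ∃ (w : M) (m : ℕ), k ≤ m ∧ t ≤ dist (y 0) (y m) ∧
      dist (y k) w = t - dist (y 0) (y k) ∧
      dist w (y m) ≤ dist (y 0) (y m) - t + ε ∧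
      t - ε ≤ dist (y 0) w ∧ dist (y 0) w ≤ t ∧
      (∀ z, horo (y 0) w z ≤ horo (y 0) (y k) z + ε) ∧
      (∀ z, h z - 2*ε ≤ horo (y 0) w z) ∧
      0 ≤ h w + dist (y 0) w ∧ h w + dist (y 0) w ≤ 2*ε := by
  obtain ⟨N₂, hN₂⟩ := Filter.eventually_atTop.1 (hag.1.eventually_ge_atTop t)
  set m := max k N₂ with hm
  have hkm : k ≤ m := le_max_left _ _
  have htm : t ≤ dist (y 0) (y m) := by
    rw [dist_comm]; exact hN₂ m (le_max_right _ _)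
  obtain ⟨γ, hγ0, hγ1, hγiso⟩ := hgeo (y k) (y m)
  set s := t - dist (y 0) (y k) with hs
  have hs0 : 0 ≤ s := by linarith
  have hag1 := hg.1 k m le_rfl hkm
  rw [dist_comm (y m) (y k), dist_comm (y k) (y 0), dist_comm (y m) (y 0)] at hag1
  have hskm : s ≤ dist (y k) (y m) := by
    have := dist_triangle (y 0) (y k) (y m)
    linarith
  set w := γ s with hw
  have hmem0 : (0:ℝ) ∈ Set.Icc (0:ℝ) (dist (y k) (y m)) := ⟨le_rfl, dist_nonneg⟩
  have hmems : s ∈ Set.Icc (0:ℝ) (dist (y k) (y m)) := ⟨hs0, hskm⟩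
  have hmemd : dist (y k) (y m) ∈ Set.Icc (0:ℝ) (dist (y k) (y m)) := ⟨dist_nonneg, le_rfl⟩
  have hdkw : dist (y k) w = s := by
    have h0 := hγiso 0 hmem0 s hmems
    rw [hγ0] at h0
    rw [hw, h0, abs_sub_comm, sub_zero, abs_of_nonneg hs0]
  have hdwm : dist w (y m) = dist (y k) (y m) - s := by
    have := hγiso s hmems (dist (y k) (y m)) hmemd
    rw [hγ1] at this
    rw [this, abs_of_nonpos (by linarith)]; ring
  have hdwm' : dist w (y m) ≤ dist (y 0) (y m) - t + ε := by
    rw [hdwm]; linarith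
  have hbw_le : dist (y 0) w ≤ t := by
    have := dist_triangle (y 0) (y k) w
    rw [hdkw] at this; linarith
  have hbw_ge : t - ε ≤ dist (y 0) w := by
    have := dist_triangle (y 0) w (y m)
    linarith
  refine ⟨w, m, hkm, htm, hdkw, hdwm', hbw_ge, hbw_le, ?_, ?_, ?_, ?_⟩
  · intro z
    have h1 := dist_triangle z (y k) w
    simp only [horo]
    rw [hdkw] at h1
    linarith
  · intro z
    have h1 : dist z (y m) - dist w (y m) ≤ dist z w := by
      have := dist_triangle z w (y m); linarith
    have h2 := hg.2.2 m hkm z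
    simp only [horo] at h2 ⊢
    linarith
  · have := hlim_ge hlim w; linarith
  · have h1 := hlim_lip hlim w (y m)
    have h2 := hg.2.1 m hkm
    rw [dist_comm (y m) w] at h1
    linarith

end Seq
end SingleSpace

section Helpers

/-- epsilon sequence -/
def eps (n : ℕ) : ℝ := ((n : ℝ) + 1)⁻¹

lemma eps_pos (n : ℕ) : 0 < eps n := by
  have : (0:ℝ) < (n:ℝ) + 1 := by positivity
  exact inv_pos.2 this

lemma eps_antitone : ∀ {n n' : ℕ}, n ≤ n' → eps n' ≤ eps n := by
  intro n n' h
  apply inv_anti₀ (by positivity)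
  have : (n:ℝ) ≤ (n':ℝ) := Nat.cast_le.2 h
  linarith

lemma eps_tendsto : Filter.Tendsto eps Filter.atTop (nhds 0) := by
  apply tendsto_inv_atTop_zero.comp
  exact Filter.tendsto_atTop_add_const_right _ 1 tendsto_natCast_atTop_atTop

lemma eps_le (n : ℕ) {c : ℝ} (hc : 0 < c) (hn : Nat.ceil c⁻¹ ≤ n) : eps n ≤ c := by
  have h1 : c⁻¹ ≤ (n:ℝ) := le_trans (Nat.le_ceil _) (Nat.cast_le.2 hn)
  have h2 : (0:ℝ) < (n:ℝ) + 1 := by positivity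
  rw [eps, inv_le_comm₀ h2 hc]
  linarith

lemma sup'_add_const {ι : Type*} (J : Finset ι) (hJ : J.Nonempty) (f : ι → ℝ) (a : ℝ) :
    J.sup' hJ (fun j => f j + a) = J.sup' hJ f + a := by
  apply le_antisymm
  · exact Finset.sup'_le _ _ fun j hj => add_le_add_left (Finset.le_sup' f hj) a
  · obtain ⟨j, hj, hje⟩ := Finset.exists_mem_eq_sup' hJ f
    rw [hje]
    exact Finset.le_sup' (fun j => f j + a) hj

lemma sup'_le_sup'_add {ι : Type*} (J : Finset ι) (hJ : J.Nonempty) (f g : ι → ℝ) (δ : ℝ)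
    (h : ∀ j ∈ J, f j ≤ g j + δ) : J.sup' hJ f ≤ J.sup' hJ g + δ :=
  Finset.sup'_le _ _ fun j hj => (h j hj).trans (add_le_add_left (Finset.le_sup' g hj) δ)

lemma tendsto_finset_sup' {ι : Type*} (J : Finset ι) (hJ : J.Nonempty)
    (f : ℕ → ι → ℝ) (g : ι → ℝ)
    (hf : ∀ j ∈ J, Filter.Tendsto (fun n => f n j) Filter.atTop (nhds (g j))) :
    Filter.Tendsto (fun n => J.sup' hJ (f n)) Filter.atTop (nhds (J.sup' hJ g)) := by
  have := Filter.Tendsto.finset_sup'_nhds_apply (f := fun j n => f n j) hJ hf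
  simpa using this

end Helpers

lemma eps_le_one (n : ℕ) : eps n ≤ 1 := by
  rw [eps]
  rw [inv_le_one_iff₀]
  right
  have : (0:ℝ) ≤ (n:ℝ) := Nat.cast_nonneg n
  linarith

section Product

variable {p : ℕ} {M : Fin p → Type*} [∀ j, MetricSpace (M j)]

theorem main_construction
    (hgeo : ∀ j, IsGeodesicSpace (M j))
    (y : ∀ j, ℕ → M j) (hy : ∀ j, IsAlmostGeodesicSeq (y j))
    (hs : ∀ j, M j → ℝ) (hconv : ∀ j, HoroLim (y j 0) (y j) (hs j))
    (J : Finset (Fin p)) (hJ : J.Nonempty)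
    (γ : Fin p → ℝ) (hγ : ∀ j ∈ J, 0 ≤ γ j) (hγ0 : ∃ j ∈ J, γ j = 0) :
    ∃ (z : ℕ → ∀ j, M j) (R : ℕ → ℝ),
      z 0 = (fun j => y j 0) ∧
      (∀ n : ℕ, (n : ℝ) + 1 ≤ R n) ∧
      (∀ n, dist (fun j => y j 0) (z (n+1)) ≤ R n) ∧
      (∀ n, R n - eps n ≤ dist (fun j => y j 0) (z (n+1))) ∧
      (∀ n, ∀ j ∈ J, |hs j (z (n+1) j) + (R n - γ j)| ≤ 3 * eps n) ∧
      IsAlmostGeodesicSeq z ∧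
      HoroLim (fun j => y j 0) z (fun x => J.sup' hJ fun j => hs j (x j) - γ j) := by
  classical
  obtain ⟨j₀, hj₀J, hj₀γ⟩ := hγ0
  have hNG : ∀ (j : Fin p) (n : ℕ), ∃ N, Good (y j) (hs j) (eps n) N :=
    fun j n => exists_good (hy j) (hconv j) (eps_pos n)
  choose NG hNG using hNG
  have hstep : ∀ (j : Fin p) (ε t : ℝ) (k : ℕ), ∃ (w : M j) (m : ℕ),
      0 < ε → Good (y j) (hs j) ε k → dist (y j 0) (y j k) ≤ t →
      (k ≤ m ∧ t ≤ dist (y j 0) (y j m) ∧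
        dist (y j k) w = t - dist (y j 0) (y j k) ∧
        dist w (y j m) ≤ dist (y j 0) (y j m) - t + ε ∧
        t - ε ≤ dist (y j 0) w ∧ dist (y j 0) w ≤ t ∧
        (∀ u, horo (y j 0) w u ≤ horo (y j 0) (y j k) u + ε) ∧
        (∀ u, hs j u - 2*ε ≤ horo (y j 0) w u) ∧
        0 ≤ hs j w + dist (y j 0) w ∧ hs j w + dist (y j 0) w ≤ 2*ε) := by
    intro j ε t k
    by_cases h1 : 0 < ε
    · by_cases h2 : Good (y j) (hs j) ε k
      · by_cases h3 : dist (y j 0) (y j k) ≤ t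
        · obtain ⟨w, m, hp⟩ := step (hy j) (hconv j) (hgeo j) h1 h2 h3
          exact ⟨w, m, fun _ _ _ => hp⟩
        · exact ⟨y j 0, k, fun _ _ h => absurd h h3⟩
      · exact ⟨y j 0, k, fun _ h _ => absurd h h2⟩
    · exact ⟨y j 0, k, fun h _ _ => absurd h h1⟩
  choose W Mf hWMf using hstep
  set Rfun : (∀ j, ℕ) → ℕ → ℝ :=
    fun K n => (J.sup' hJ fun j => dist (y j 0) (y j (K j)) + γ j) + n + 1 with hRfundef
  set F : ((∀ j, ℕ) × ℝ) → ℕ → ((∀ j, ℕ) × ℝ) := fun prev n =>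
    (fun j => max (Mf j (eps n) (prev.2 - γ j) (prev.1 j) + 1) (NG j (n+1)),
     max (prev.2 + 1)
       (Rfun (fun j => max (Mf j (eps n) (prev.2 - γ j) (prev.1 j) + 1) (NG j (n+1))) (n+1)))
    with hFdef
  set S : ℕ → ((∀ j, ℕ) × ℝ) :=
    fun n => Nat.rec (⟨fun j => NG j 0, Rfun (fun j => NG j 0) 0⟩) (fun n prev => F prev n) n
    with hSdef
  set Kf : ℕ → ∀ j, ℕ := fun n => (S n).1 with hKfdef
  set R : ℕ → ℝ := fun n => (S n).2 with hRdef
  set mf : ℕ → ∀ j : Fin p, ℕ := fun n j => Mf j (eps n) (R n - γ j) (Kf n j) with hmfdef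
  set wf : ∀ _ : ℕ, ∀ j, M j := fun n j => W j (eps n) (R n - γ j) (Kf n j) with hwfdef
  have hK0 : ∀ j, Kf 0 j = NG j 0 := fun j => rfl
  have hKsucc : ∀ n j, Kf (n+1) j = max (mf n j + 1) (NG j (n+1)) := fun n j => rfl
  have hR0 : R 0 = Rfun (Kf 0) 0 := rfl
  have hRsucc : ∀ n, R (n+1) = max (R n + 1) (Rfun (Kf (n+1)) (n+1)) := fun n => rfl
  have hRfun_ge : ∀ (K : ∀ j, ℕ) (n : ℕ), ∀ j ∈ J,
      dist (y j 0) (y j (K j)) + γ j + ((n:ℝ)+1) ≤ Rfun K n := by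
    intro K n j hj
    have h1 := Finset.le_sup' (fun j => dist (y j 0) (y j (K j)) + γ j) hj
    simp only [hRfundef]
    linarith
  have hRfun_lin : ∀ (K : ∀ j, ℕ) (n : ℕ), ((n:ℝ)+1) ≤ Rfun K n := by
    intro K n
    have h1 := hRfun_ge K n j₀ hj₀J
    have d0 : (0:ℝ) ≤ dist (y j₀ 0) (y j₀ (K j₀)) := dist_nonneg
    rw [hj₀γ] at h1
    linarith
  have hRge : ∀ n, Rfun (Kf n) n ≤ R n := by
    intro n
    cases n with
    | zero => exact le_of_eq hR0.symm
    | succ n => rw [hRsucc]; exact le_max_right _ _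
  have hRmono : ∀ n, R n + 1 ≤ R (n+1) := by
    intro n; rw [hRsucc]; exact le_max_left _ _
  have hRlin : ∀ n : ℕ, (n:ℝ) + 1 ≤ R n := by
    intro n
    induction n with
    | zero => exact le_trans (by norm_num) ((hRfun_lin (Kf 0) 0).trans (hRge 0))
    | succ n ih =>
      have := hRmono n
      push_cast
      push_cast at ih
      linarith
  have hRmono' : ∀ {a b : ℕ}, a ≤ b → R a ≤ R b := by
    intro a b hab
    induction hab with
    | refl => exact le_rfl
    | @step c _ ih => exact ih.trans (by linarith [hRmono c])
  have hgood : ∀ n j, Good (y j) (hs j) (eps n) (Kf n j) := by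
    intro n j
    cases n with
    | zero => rw [hK0]; exact hNG j 0
    | succ n =>
      refine good_mono (hNG j (n+1)) ?_
      rw [hKsucc]
      exact le_max_right _ _
  have hdt : ∀ n, ∀ j ∈ J, dist (y j 0) (y j (Kf n j)) ≤ R n - γ j := by
    intro n j hj
    have h1 := hRfun_ge (Kf n) n j hj
    have h2 := hRge n
    have h3 : (0:ℝ) ≤ (n:ℝ) + 1 := by positivity
    linarith
  have SP : ∀ (n : ℕ), ∀ j ∈ J,
      Kf n j ≤ mf n j ∧ R n - γ j ≤ dist (y j 0) (y j (mf n j)) ∧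
      dist (y j (Kf n j)) (wf n j) = R n - γ j - dist (y j 0) (y j (Kf n j)) ∧
      dist (wf n j) (y j (mf n j)) ≤ dist (y j 0) (y j (mf n j)) - (R n - γ j) + eps n ∧
      R n - γ j - eps n ≤ dist (y j 0) (wf n j) ∧
      dist (y j 0) (wf n j) ≤ R n - γ j ∧
      (∀ u, horo (y j 0) (wf n j) u ≤ horo (y j 0) (y j (Kf n j)) u + eps n) ∧
      (∀ u, hs j u - 2 * eps n ≤ horo (y j 0) (wf n j) u) ∧
      0 ≤ hs j (wf n j) + dist (y j 0) (wf n j) ∧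
      hs j (wf n j) + dist (y j 0) (wf n j) ≤ 2 * eps n :=
    fun (n : ℕ) (j : Fin p) (hj : j ∈ J) =>
    hWMf j (eps n) (R n - γ j) (Kf n j) (eps_pos n) (hgood n j) (hdt n j hj)
  have hKstep : ∀ n, ∀ j ∈ J, Kf n j < Kf (n+1) j := by
    intro n j hj
    have h1 : Kf n j ≤ mf n j := (SP n j hj).1
    calc Kf n j < mf n j + 1 := Nat.lt_succ_of_le h1
    _ ≤ max (mf n j + 1) (NG j (n+1)) := le_max_left _ _
    _ = Kf (n+1) j := (hKsucc n j).symm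
  have hKmono : ∀ {a b : ℕ}, a ≤ b → ∀ j ∈ J, Kf a j ≤ Kf b j := by
    intro a b hab j hj
    induction hab with
    | refl => exact le_rfl
    | step _ ih => exact ih.trans (hKstep _ j hj).le
  have hKge : ∀ n, ∀ j ∈ J, n ≤ Kf n j := by
    intro n j hj
    induction n with
    | zero => exact Nat.zero_le _
    | succ n ih => exact Nat.succ_le_of_lt (lt_of_le_of_lt ih (hKstep n j hj))
  have hmfK : ∀ a b : ℕ, a < b → ∀ j ∈ J, mf a j < Kf b j := by
    intro a b hab j hj
    have h1 : mf a j + 1 ≤ Kf (a+1) j := by rw [hKsucc]; exact le_max_left _ _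
    have h2 : Kf (a+1) j ≤ Kf b j := hKmono hab j hj
    omega
  have chain : ∀ a b : ℕ, a < b → ∀ j ∈ J,
      dist (wf a j) (wf b j) ≤ (R b - R a) + 2 * eps a := by
    intro a b hab j hj
    have hk_m : Kf a j ≤ mf a j := (SP a j hj).1
    have hdwm := (SP a j hj).2.2.2.1
    have hdkw' := (SP b j hj).2.2.1
    have hcross := (hgood a j).1 (mf a j) (Kf b j) hk_m (hmfK a b hab j hj).le
    have htri := dist_triangle4 (wf a j) (y j (mf a j)) (y j (Kf b j)) (wf b j)
    have hc1 := dist_comm (y j (Kf b j)) (y j (mf a j))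
    have hc2 := dist_comm (y j (mf a j)) (y j 0)
    have hc3 := dist_comm (y j (Kf b j)) (y j 0)
    have hc4 := dist_comm (y j (Kf b j)) (wf b j)
    linarith
  -- the sequence z
  set z : ℕ → ∀ j, M j :=
    fun n j => if n = 0 then y j 0 else if j ∈ J then wf (n-1) j else y j 0 with hzdef
  have hz0 : z 0 = (fun j => y j 0) := rfl
  have hzJ : ∀ n j, j ∈ J → z (n+1) j = wf n j := by
    intro n j hj; simp [hzdef, hj]
  have hzNJ : ∀ n j, j ∉ J → z (n+1) j = y j 0 := by
    intro n j hj; simp [hzdef, hj]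
  have hRpos : ∀ n, (0:ℝ) ≤ R n := by
    intro n
    have h1 := hRlin n
    have h2 : (0:ℝ) ≤ (n:ℝ) := Nat.cast_nonneg n
    linarith
  have hdzb_le : ∀ n, dist (fun j => y j 0) (z (n+1)) ≤ R n := by
    intro n
    rw [dist_pi_le_iff (hRpos n)]
    intro j
    by_cases hj : j ∈ J
    · rw [hzJ n j hj]
      have h1 := (SP n j hj).2.2.2.2.2.1
      have h2 := hγ j hj
      linarith
    · rw [hzNJ n j hj]
      simpa using hRpos n
  have hdzb_ge : ∀ n, R n - eps n ≤ dist (fun j => y j 0) (z (n+1)) := by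
    intro n
    have h1 : dist (y j₀ 0) (z (n+1) j₀) ≤ dist (fun j => y j 0) (z (n+1)) :=
      dist_le_pi_dist (fun j => y j 0) (z (n+1)) j₀
    rw [hzJ n j₀ hj₀J] at h1
    have h2 := (SP n j₀ hj₀J).2.2.2.2.1
    rw [hj₀γ] at h2
    linarith [hj₀γ]
  have hhsz : ∀ n, ∀ j ∈ J, |hs j (z (n+1) j) + (R n - γ j)| ≤ 3 * eps n := by
    intro n j hj
    rw [hzJ n j hj]
    have hd1 := (SP n j hj).2.2.2.2.1
    have hd2 := (SP n j hj).2.2.2.2.2.1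
    have hh1 := (SP n j hj).2.2.2.2.2.2.2.2.1
    have hh2 := (SP n j hj).2.2.2.2.2.2.2.2.2
    have he := eps_pos n
    rw [abs_le]
    constructor <;> linarith
  -- almost geodesic
  have hagz : IsAlmostGeodesicSeq z := by
    constructor
    · rw [Filter.tendsto_atTop]
      intro C
      filter_upwards [Filter.eventually_ge_atTop (Nat.ceil (C + 1) + 1)] with n hn
      obtain ⟨m, rfl⟩ : ∃ m, n = m + 1 := ⟨n - 1, by omega⟩
      have h1 := hdzb_ge m
      have h2 := hRlin m
      have h3 : eps m ≤ 1 := eps_le_one m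
      have h4 : C + 1 ≤ (m:ℝ) + 1 := by
        have h5 : Nat.ceil (C+1) ≤ m := by omega
        have h6 : (Nat.ceil (C+1) : ℝ) ≤ m := Nat.cast_le.2 h5
        have h7 : C + 1 ≤ (Nat.ceil (C+1) : ℝ) := Nat.le_ceil _
        linarith
      rw [hz0, dist_comm]
      linarith
    · intro δ hδ
      obtain ⟨N₁, hN₁⟩ : ∃ N₁ : ℕ, 3 * eps N₁ < δ := by
        refine ⟨Nat.ceil ((δ/6)⁻¹), ?_⟩
        have := eps_le (Nat.ceil ((δ/6)⁻¹)) (by linarith) le_rfl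
        linarith
      refine ⟨N₁ + 2, ?_⟩
      intro m k hk hkm
      rcases eq_or_lt_of_le hkm with rfl | hlt
      · simp [dist_self]
        linarith
      · obtain ⟨k', rfl⟩ : ∃ k'', k = k'' + 1 := ⟨k - 1, by omega⟩
        obtain ⟨m', rfl⟩ : ∃ m'', m = m'' + 1 := ⟨m - 1, by omega⟩
        have hk'm' : k' < m' := by omega
        have hnn : (0:ℝ) ≤ (R m' - R k') + 2 * eps k' := by
          have h1 : R k' ≤ R m' := hRmono' hk'm'.le
          have h2 := eps_pos k'
          linarith
        have hdzz : dist (z (m'+1)) (z (k'+1)) ≤ (R m' - R k') + 2 * eps k' := by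
          rw [dist_pi_le_iff hnn]
          intro j
          by_cases hj : j ∈ J
          · rw [hzJ m' j hj, hzJ k' j hj, dist_comm]
            exact chain k' m' hk'm' j hj
          · rw [hzNJ m' j hj, hzNJ k' j hj]
            simpa using hnn
        have h1 := hdzb_le k'
        have h2 := hdzb_ge m'
        have h3 : eps k' ≤ eps N₁ := eps_antitone (by omega)
        have h4 : eps m' ≤ eps k' := eps_antitone hk'm'.le
        have hc1 := dist_comm (fun j => y j 0) (z (k'+1))
        have hc2 := dist_comm (fun j => y j 0) (z (m'+1))
        rw [hz0]
        linarith
  -- HoroLim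
  have hhoro : HoroLim (fun j => y j 0) z (fun x => J.sup' hJ fun j => hs j (x j) - γ j) := by
    intro x
    rw [← Filter.tendsto_add_atTop_iff_nat 1]
    have hlow : ∀ n : ℕ, (J.sup' hJ fun j => hs j (x j) - γ j) - 3 * eps n ≤
        horo (fun j => y j 0) (z (n+1)) x := by
      intro n
      rw [sub_le_iff_le_add]
      apply Finset.sup'_le
      intro j hj
      have hd1 : dist (x j) (wf n j) ≤ dist x (z (n+1)) := by
        have h := dist_le_pi_dist x (z (n+1)) j
        rwa [hzJ n j hj] at h
      have hlo := (SP n j hj).2.2.2.2.2.2.2.1 (x j)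
      have hd2 := (SP n j hj).2.2.2.2.1
      have hdb := hdzb_le n
      simp only [horo] at hlo ⊢
      linarith
    have hup : ∀ᶠ n in Filter.atTop, horo (fun j => y j 0) (z (n+1)) x ≤
        (J.sup' hJ fun j => horo (y j 0) (y j (Kf n j)) (x j) - γ j) + 2 * eps n := by
      have hev : ∀ᶠ n : ℕ in Filter.atTop, 2 * dist x (fun j => y j 0) ≤ (n:ℝ) + 1 := by
        filter_upwards [Filter.eventually_ge_atTop (Nat.ceil (2 * dist x (fun j => y j 0)))]
          with n hn
        have h1 : (2:ℝ) * dist x (fun j => y j 0) ≤ (Nat.ceil (2 * dist x (fun j => y j 0)) : ℝ) :=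
          Nat.le_ceil _
        have h2 : (Nat.ceil (2 * dist x (fun j => y j 0)) : ℝ) ≤ (n:ℝ) := Nat.cast_le.2 hn
        linarith
      filter_upwards [hev] with n hn
      have hAge : dist x (fun j => y j 0) ≤
          (J.sup' hJ fun j => horo (y j 0) (y j (Kf n j)) (x j) - γ j) + eps n + R n := by
        have h1 := Finset.le_sup' (fun j => horo (y j 0) (y j (Kf n j)) (x j) - γ j) hj₀J
        have h2 := neg_dist_le_horo (y j₀ 0) (y j₀ (Kf n j₀)) (x j₀)
        have h3 : dist (x j₀) (y j₀ 0) ≤ dist x (fun j => y j 0) :=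
          dist_le_pi_dist x (fun j => y j 0) j₀
        have h4 := hRlin n
        have h5 := eps_pos n
        have h6 := dist_comm (x j₀) (y j₀ 0)
        rw [hj₀γ] at h1
        linarith
      have hdxz : dist x (z (n+1)) ≤
          (J.sup' hJ fun j => horo (y j 0) (y j (Kf n j)) (x j) - γ j) + eps n + R n := by
        rw [dist_pi_le_iff (le_trans dist_nonneg hAge)]
        intro j
        by_cases hj : j ∈ J
        · rw [hzJ n j hj]
          have hu := (SP n j hj).2.2.2.2.2.2.1 (x j)
          have hd := (SP n j hj).2.2.2.2.2.1
          have hsup := Finset.le_sup' (fun j => horo (y j 0) (y j (Kf n j)) (x j) - γ j) hj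
          have h2 := hγ j hj
          have he : horo (y j 0) (wf n j) (x j)
              = dist (x j) (wf n j) - dist (y j 0) (wf n j) := rfl
          linarith
        · rw [hzNJ n j hj]
          exact le_trans (dist_le_pi_dist x (fun j => y j 0) j) hAge
      have hdbz := hdzb_ge n
      have he : horo (fun j => y j 0) (z (n+1)) x
          = dist x (z (n+1)) - dist (fun j => y j 0) (z (n+1)) := rfl
      linarith
    have hU : Filter.Tendsto
        (fun n => (J.sup' hJ fun j => horo (y j 0) (y j (Kf n j)) (x j) - γ j) + 2 * eps n)
        Filter.atTop (nhds ((J.sup' hJ fun j => hs j (x j) - γ j) + 2 * 0)) := by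
      apply Filter.Tendsto.add
      · apply tendsto_finset_sup'
        intro j hj
        have hKt : Filter.Tendsto (fun n => Kf n j) Filter.atTop Filter.atTop :=
          Filter.tendsto_atTop_mono (fun n => hKge n j hj) Filter.tendsto_id
        exact ((hconv j (x j)).comp hKt).sub tendsto_const_nhds
      · exact eps_tendsto.const_mul 2
    rw [mul_zero, add_zero] at hU
    have hL : Filter.Tendsto
        (fun n => (J.sup' hJ fun j => hs j (x j) - γ j) - 3 * eps n)
        Filter.atTop (nhds ((J.sup' hJ fun j => hs j (x j) - γ j) - 3 * 0)) :=
      tendsto_const_nhds.sub (eps_tendsto.const_mul 3)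
    rw [mul_zero, sub_zero] at hL
    exact tendsto_of_tendsto_of_tendsto_of_le_of_le' hL hU
      (Filter.Eventually.of_forall hlow) hup
  exact ⟨z, R, hz0, hRlin, hdzb_le, hdzb_ge, hhsz, hagz, hhoro⟩

end Product

section DetourLemmas

lemma detourCost_ge {N : Type*} [MetricSpace N] (b : N) (h₁ h₂ : N → ℝ)
    (hlip : ∀ u v : N, h₂ u ≤ h₂ v + dist v u) (z₀ : N) :
    ((h₂ z₀ - h₁ z₀ : ℝ) : EReal) ≤ detourCost b h₁ h₂ := by
  rw [detourCost]
  apply le_iInf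
  rintro ⟨v, hv⟩
  have hpt : ∀ n, ((h₂ z₀ - horo b (v n) z₀ : ℝ) : EReal)
      ≤ ((dist b (v n) + h₂ (v n) : ℝ) : EReal) := by
    intro n
    rw [EReal.coe_le_coe_iff]
    have h1 := hlip z₀ (v n)
    have h2 : horo b (v n) z₀ = dist z₀ (v n) - dist b (v n) := rfl
    have h3 := dist_comm (v n) z₀
    linarith
  have hg : Filter.Tendsto (fun n => ((h₂ z₀ - horo b (v n) z₀ : ℝ) : EReal)) Filter.atTop
      (nhds ((h₂ z₀ - h₁ z₀ : ℝ) : EReal)) := by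
    rw [EReal.tendsto_coe]
    exact tendsto_const_nhds.sub (hv z₀)
  calc ((h₂ z₀ - h₁ z₀ : ℝ) : EReal)
      = Filter.liminf (fun n => ((h₂ z₀ - horo b (v n) z₀ : ℝ) : EReal)) Filter.atTop :=
        hg.liminf_eq.symm
    _ ≤ _ := Filter.liminf_le_liminf (Filter.Eventually.of_forall hpt)

lemma detourCost_le_of_seq {N : Type*} [MetricSpace N] (b : N) (h₁ h₂ : N → ℝ) (z : ℕ → N)
    (hz : HoroLim b z h₁) (c : ℝ)
    (hc : Filter.Tendsto (fun n => dist b (z n) + h₂ (z n)) Filter.atTop (nhds c)) :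
    detourCost b h₁ h₂ ≤ (c : EReal) := by
  rw [detourCost]
  refine le_trans (iInf_le _ ⟨z, hz⟩) (le_of_eq ?_)
  exact (EReal.tendsto_coe.2 hc).liminf_eq

end DetourLemmas

section ProductFinal

variable {p : ℕ} {M : Fin p → Type*} [∀ j, MetricSpace (M j)]

lemma hgamma_lip (y : ∀ j, ℕ → M j) (hs : ∀ j, M j → ℝ)
    (hconv : ∀ j, HoroLim (y j 0) (y j) (hs j))
    (J : Finset (Fin p)) (hJ : J.Nonempty) (γ : Fin p → ℝ) :
    ∀ x x' : ∀ j, M j,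
      (J.sup' hJ fun j => hs j (x j) - γ j) ≤ (J.sup' hJ fun j => hs j (x' j) - γ j) + dist x' x := by
  intro x x'
  apply Finset.sup'_le
  intro j hj
  have h1 := hlim_lip (hconv j) (x j) (x' j)
  have h2 := Finset.le_sup' (fun j => hs j (x' j) - γ j) hj
  have h3 : dist (x' j) (x j) ≤ dist x' x := dist_le_pi_dist x' x j
  linarith

theorem detourCost_pair
    (hgeo : ∀ j, IsGeodesicSpace (M j))
    (y : ∀ j, ℕ → M j) (hy : ∀ j, IsAlmostGeodesicSeq (y j))
    (hs : ∀ j, M j → ℝ) (hconv : ∀ j, HoroLim (y j 0) (y j) (hs j))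
    (J : Finset (Fin p)) (hJ : J.Nonempty)
    (γ : Fin p → ℝ) (hγ : ∀ j ∈ J, 0 ≤ γ j) (hγ0 : ∃ j ∈ J, γ j = 0)
    (γ' : Fin p → ℝ) :
    detourCost (fun j => y j 0)
      (fun x => J.sup' hJ fun j => hs j (x j) - γ j)
      (fun x => J.sup' hJ fun j => hs j (x j) - γ' j)
      = ((J.sup' hJ fun j => γ j - γ' j : ℝ) : EReal) := by
  obtain ⟨z, R, hz0, hRlin, hle, hge, hhsz, hagz, hhoro⟩ :=
    main_construction hgeo y hy hs hconv J hJ γ hγ hγ0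
  set c : ℝ := J.sup' hJ fun j => γ j - γ' j with hc
  apply le_antisymm
  · apply detourCost_le_of_seq _ _ _ z hhoro
    rw [← Filter.tendsto_add_atTop_iff_nat 1]
    have hb1 : ∀ n : ℕ, dist (fun j => y j 0) (z (n+1))
        + (J.sup' hJ fun j => hs j (z (n+1) j) - γ' j) ≤ c + 3 * eps n := by
      intro n
      have hsup : (J.sup' hJ fun j => hs j (z (n+1) j) - γ' j)
          ≤ (J.sup' hJ fun j => γ j - γ' j) + (3 * eps n - R n) := by
        apply sup'_le_sup'_add
        intro j hj
        have h1 := abs_le.1 (hhsz n j hj)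
        have h2 := h1.2
        linarith
      have h3 := hle n
      rw [hc]
      linarith
    have hb2 : ∀ n : ℕ, c - 4 * eps n ≤ dist (fun j => y j 0) (z (n+1))
        + (J.sup' hJ fun j => hs j (z (n+1) j) - γ' j) := by
      intro n
      obtain ⟨js, hjs, hjse⟩ := Finset.exists_mem_eq_sup' hJ (fun j => γ j - γ' j)
      have h1 := abs_le.1 (hhsz n js hjs)
      have h2 : hs js (z (n+1) js) - γ' js ≤ J.sup' hJ fun j => hs j (z (n+1) j) - γ' j :=
        Finset.le_sup' (fun j => hs j (z (n+1) j) - γ' j) hjs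
      have h3 := hge n
      rw [hc, hjse]
      linarith [h1.1]
    have hU : Filter.Tendsto (fun n : ℕ => c + 3 * eps n) Filter.atTop (nhds (c + 3 * 0)) :=
      tendsto_const_nhds.add (eps_tendsto.const_mul 3)
    have hL : Filter.Tendsto (fun n : ℕ => c - 4 * eps n) Filter.atTop (nhds (c - 4 * 0)) :=
      tendsto_const_nhds.sub (eps_tendsto.const_mul 4)
    rw [mul_zero, add_zero] at hU
    rw [mul_zero, sub_zero] at hL
    exact tendsto_of_tendsto_of_tendsto_of_le_of_le hL hU hb2 hb1
  · have key : ∀ n : ℕ, ((c - 6 * eps n : ℝ) : EReal) ≤ detourCost (fun j => y j 0)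
        (fun x => J.sup' hJ fun j => hs j (x j) - γ j)
        (fun x => J.sup' hJ fun j => hs j (x j) - γ' j) := by
      intro n
      refine le_trans ?_ (detourCost_ge (fun j => y j 0) _ _
        (hgamma_lip y hs hconv J hJ γ') (z (n+1)))
      rw [EReal.coe_le_coe_iff]
      obtain ⟨js, hjs, hjse⟩ := Finset.exists_mem_eq_sup' hJ (fun j => γ j - γ' j)
      have h1 := abs_le.1 (hhsz n js hjs)
      have h2 : hs js (z (n+1) js) - γ' js ≤ J.sup' hJ fun j => hs j (z (n+1) j) - γ' j :=
        Finset.le_sup' (fun j => hs j (z (n+1) j) - γ' j) hjs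
      have h3 : (J.sup' hJ fun j => hs j (z (n+1) j) - γ j) ≤ -R n + 3 * eps n := by
        apply Finset.sup'_le
        intro j hj
        have h4 := abs_le.1 (hhsz n j hj)
        linarith [h4.2]
      rw [hc, hjse]
      linarith [h1.1]
    have hlim : Filter.Tendsto (fun n : ℕ => ((c - 6 * eps n : ℝ) : EReal)) Filter.atTop
        (nhds ((c : ℝ) : EReal)) := by
      rw [EReal.tendsto_coe]
      have : Filter.Tendsto (fun n : ℕ => c - 6 * eps n) Filter.atTop (nhds (c - 6 * 0)) :=
        tendsto_const_nhds.sub (eps_tendsto.const_mul 6)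
      rwa [mul_zero, sub_zero] at this
    exact le_of_tendsto hlim (Filter.Eventually.of_forall key)

theorem isBusemann_prod
    (hgeo : ∀ j, IsGeodesicSpace (M j))
    (y : ∀ j, ℕ → M j) (hy : ∀ j, IsAlmostGeodesicSeq (y j))
    (hs : ∀ j, M j → ℝ) (hconv : ∀ j, HoroLim (y j 0) (y j) (hs j))
    (J : Finset (Fin p)) (hJ : J.Nonempty)
    (γ : Fin p → ℝ) (hγ : ∀ j ∈ J, 0 ≤ γ j) (hγ0 : ∃ j ∈ J, γ j = 0) :
    IsBusemannPoint (fun j => y j 0) (fun x => J.sup' hJ fun j => hs j (x j) - γ j) := by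
  obtain ⟨z, R, hz0, hRlin, hle, hge, hhsz, hagz, hhoro⟩ :=
    main_construction hgeo y hy hs hconv J hJ γ hγ hγ0
  refine ⟨⟨⟨z, hhoro⟩, ?_⟩, z, hagz, hhoro⟩
  intro v hv
  set n : ℕ := Nat.ceil (dist (fun j => y j 0) v + 3) with hn
  have h1 : (J.sup' hJ fun j => hs j (z (n+1) j) - γ j) ≤ -R n + 3 * eps n := by
    apply Finset.sup'_le
    intro j hj
    have h4 := abs_le.1 (hhsz n j hj)
    linarith [h4.2]
  have h2 := congrFun hv (z (n+1))
  have h3 : -dist (fun j => y j 0) v ≤ horo (fun j => y j 0) v (z (n+1)) := by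
    have he : horo (fun j => y j 0) v (z (n+1))
        = dist (z (n+1)) v - dist (fun j => y j 0) v := rfl
    have hd : (0:ℝ) ≤ dist (z (n+1)) v := dist_nonneg
    linarith
  rw [← h2] at h3
  have h5 : dist (fun j => y j 0) v + 3 ≤ (n:ℝ) := Nat.le_ceil _
  have h6 := hRlin n
  have h7 := eps_le_one n
  have h8 := eps_pos n
  linarith

end ProductFinal

/-- the part of a product Busemann point contains an isometric copy of
(ℝ^J/Sp(1), ‖·‖_var), modelled by S = {β ∈ ℝ^J : min_{j∈J} β_j = 0}. -/
theorem stmt_11 (p : ℕ) (M : Fin p → Type*) [∀ j, MetricSpace (M j)] [∀ j, ProperSpace (M j)]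
    (hgeo : ∀ j, IsGeodesicSpace (M j))
    (y : ∀ j, ℕ → M j) (hy : ∀ j, IsAlmostGeodesicSeq (y j))
    (hs : ∀ j, M j → ℝ) (hconv : ∀ j, HoroLim (y j 0) (y j) (hs j))
    (J : Finset (Fin p)) (hJ : J.Nonempty)
    (α : Fin p → ℝ) (hα : ∀ j ∈ J, 0 ≤ α j) (hα0 : ∃ j ∈ J, α j = 0) :
    ∃ ψ : (Fin p → ℝ) → ((∀ j, M j) → ℝ),
      (∀ β : Fin p → ℝ, (∀ j ∈ J, 0 ≤ β j) → (∃ j ∈ J, β j = 0) →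
        IsBusemannPoint (fun j => y j 0) (ψ β) ∧
        detourDist (fun j => y j 0)
          (fun x => J.sup' hJ fun j => hs j (x j) - α j) (ψ β) < ⊤) ∧
      (∀ β β' : Fin p → ℝ, (∀ j ∈ J, 0 ≤ β j) → (∃ j ∈ J, β j = 0) →
        (∀ j ∈ J, 0 ≤ β' j) → (∃ j ∈ J, β' j = 0) →
        detourDist (fun j => y j 0) (ψ β) (ψ β') =
          (((J.sup' hJ fun j => β j - β' j) + (J.sup' hJ fun j => β' j - β j) : ℝ) : EReal)) := by
  classical
  set cf : (Fin p → ℝ) → ℝ := fun β => J.inf' hJ (fun i => α i + β i) with hcf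
  set gf : (Fin p → ℝ) → (Fin p → ℝ) := fun β j => α j + β j - cf β with hgf
  have hadm : ∀ β : Fin p → ℝ, (∀ j ∈ J, 0 ≤ gf β j) ∧ (∃ j ∈ J, gf β j = 0) := by
    intro β
    constructor
    · intro j hj
      have h1 := Finset.inf'_le (fun i => α i + β i) hj
      show (0:ℝ) ≤ α j + β j - J.inf' hJ (fun i => α i + β i)
      linarith
    · obtain ⟨j, hj, hje⟩ := Finset.exists_mem_eq_inf' hJ (fun i => α i + β i)
      refine ⟨j, hj, ?_⟩
      show α j + β j - J.inf' hJ (fun i => α i + β i) = 0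
      rw [← hje]
      ring
  refine ⟨fun β => (fun x => J.sup' hJ fun j => hs j (x j) - gf β j), ?_, ?_⟩
  · intro β hβ hβ0
    obtain ⟨ha1, ha2⟩ := hadm β
    constructor
    · exact isBusemann_prod hgeo y hy hs hconv J hJ (gf β) ha1 ha2
    · have e1 := detourCost_pair hgeo y hy hs hconv J hJ α hα hα0 (gf β)
      have e2 := detourCost_pair hgeo y hy hs hconv J hJ (gf β) ha1 ha2 α
      refine lt_of_eq_of_lt (congrArg₂ HAdd.hAdd e1 e2) ?_
      rw [← EReal.coe_add]
      exact EReal.coe_lt_top _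
  · intro β β' hβ hβ0 hβ' hβ'0
    obtain ⟨ha1, ha2⟩ := hadm β
    obtain ⟨hb1, hb2⟩ := hadm β'
    have e1 := detourCost_pair hgeo y hy hs hconv J hJ (gf β) ha1 ha2 (gf β')
    have e2 := detourCost_pair hgeo y hy hs hconv J hJ (gf β') hb1 hb2 (gf β)
    refine (congrArg₂ HAdd.hAdd e1 e2).trans ?_
    rw [← EReal.coe_add, EReal.coe_eq_coe_iff]
    have k1 : (J.sup' hJ fun j => gf β j - gf β' j)
        = (J.sup' hJ fun j => β j - β' j) + (cf β' - cf β) := by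
      rw [← sup'_add_const J hJ (fun j => β j - β' j) (cf β' - cf β)]
      refine Finset.sup'_congr hJ rfl ?_
      intro j hj
      simp only [hgf]
      ring
    have k2 : (J.sup' hJ fun j => gf β' j - gf β j)
        = (J.sup' hJ fun j => β' j - β j) + (cf β - cf β') := by
      rw [← sup'_add_const J hJ (fun j => β' j - β j) (cf β - cf β')]
      refine Finset.sup'_congr hJ rfl ?_
      intro j hj
      simp only [hgf]
      ring
    rw [k1, k2]
    ring
end
end

section
/- For j = 1,…,q let (N_j,ρ_j) be a proper geodesic metric space with basepoint b_j such that every horofunction of (N_j,ρ_j) is a Busemann point and δ(h_j,h_j') = ∞ for every pair of distinct Busemann points h_j ≠ h_j' of (N_j,ρ_j). Then every horofunction of the product (∏_{j=1}^q N_j, d_∞) with basepoint b = (b_1,…,b_q) is a Busemann point. -/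
open Filter Topology

noncomputable section

private lemma horo_lip_s12 {M : Type*} [MetricSpace M] (b y z w : M) :
    |horo b y z - horo b y w| ≤ dist z w := by
  simpa [horo, sub_sub_sub_cancel_right] using abs_dist_sub_le z w y

private lemma horo_bound {M : Type*} [MetricSpace M] (b y z : M) :
    |horo b y z| ≤ dist z b := abs_dist_sub_le z b y

private lemma exists_tendsto_of_almost_mono (u : ℕ → ℝ) (B : ℝ) (hB : ∀ n, u n ≤ B)
    (h : ∀ ε > (0:ℝ), ∃ N, ∀ k m, N ≤ k → k ≤ m → u k - ε ≤ u m) :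
    ∃ L, Tendsto u atTop (𝓝 L) := by
  have hcau : CauchySeq u := by
    rw [Metric.cauchySeq_iff']
    intro ε hε
    obtain ⟨N, hN⟩ := h (ε/3) (by linarith)
    set S : Set ℝ := u '' Set.Ici N with hS
    have hSne : S.Nonempty := ⟨u N, ⟨N, Set.mem_Ici.2 le_rfl, rfl⟩⟩
    have hSbdd : BddAbove S := ⟨B, by rintro _ ⟨n, -, rfl⟩; exact hB n⟩
    have hlt : sSup S - ε/3 < sSup S := by linarith
    obtain ⟨_, ⟨k, hk, rfl⟩, huk⟩ := exists_lt_of_lt_csSup hSne hlt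
    refine ⟨k, fun n hn => ?_⟩
    have h1 : u k - ε/3 ≤ u n := hN k n hk hn
    have h2 : u n ≤ sSup S := le_csSup hSbdd ⟨n, le_trans hk hn, rfl⟩
    have h3 : u k ≤ sSup S := le_csSup hSbdd ⟨k, hk, rfl⟩
    rw [Real.dist_eq, abs_sub_lt_iff]
    constructor <;> linarith
  exact cauchySeq_tendsto_of_complete hcau

private lemma dist_pi_sup' {ι : Type*} [Fintype ι] [Nonempty ι] {X : ι → Type*}
    [∀ i, MetricSpace (X i)] (f g : ∀ i, X i) :
    dist f g = Finset.univ.sup' Finset.univ_nonempty (fun i => dist (f i) (g i)) := by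
  apply le_antisymm
  · refine (dist_pi_le_iff ?_).2 fun i =>
      Finset.le_sup' (fun i => dist (f i) (g i)) (Finset.mem_univ i)
    obtain ⟨i⟩ := ‹Nonempty ι›
    exact le_trans dist_nonneg (Finset.le_sup' (fun i => dist (f i) (g i)) (Finset.mem_univ i))
  · exact Finset.sup'_le _ _ fun i _ => dist_le_pi_dist f g i

private lemma tendsto_finset_sup'_s12 {ι : Type*} (s : Finset ι) (hs : s.Nonempty)
    (f : ι → ℕ → ℝ) (L : ι → ℝ) (hf : ∀ i ∈ s, Tendsto (f i) atTop (𝓝 (L i))) :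
    Tendsto (fun n => s.sup' hs (fun i => f i n)) atTop (𝓝 (s.sup' hs L)) := by
  induction hs using Finset.Nonempty.cons_induction with
  | singleton i => simpa using hf i (Finset.mem_singleton_self i)
  | cons i s hi hs ih =>
      simp only [Finset.sup'_cons hs]
      exact (hf i (Finset.mem_cons_self i s)).max (ih fun j hj => hf j (Finset.mem_cons_of_mem hj))

private lemma sup'_sub_const {ι : Type*} (s : Finset ι) (hs : s.Nonempty) (f : ι → ℝ) (c : ℝ) :
    s.sup' hs f - c = s.sup' hs (fun i => f i - c) := by
  induction hs using Finset.Nonempty.cons_induction with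
  | singleton i => simp [Finset.sup'_singleton]
  | cons i s hi hs ih =>
      simp only [Finset.sup'_cons hs]
      rw [← ih, max_sub_sub_right]

private lemma sup'_subset_eq {ι : Type*} (s t : Finset ι) (hts : t ⊆ s) (ht : t.Nonempty)
    (f : ι → ℝ) (hdom : ∀ j ∈ s, ∃ j' ∈ t, f j ≤ f j') :
    s.sup' (Finset.Nonempty.mono hts ht) f = t.sup' ht f := by
  apply le_antisymm
  · apply Finset.sup'_le
    intro j hj
    obtain ⟨j', hj', hle⟩ := hdom j hj
    exact le_trans hle (Finset.le_sup' f hj')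
  · exact Finset.sup'_le _ _ fun j hj => Finset.le_sup' f (hts hj)

/-- finite sup of sequences, some tending to reals (on `t`), the rest to `-∞`. -/
private lemma tendsto_sup'_with_bot {ι : Type*} (s t : Finset ι) (hts : t ⊆ s)
    (ht : t.Nonempty) (f : ι → ℕ → ℝ) (L : ι → ℝ)
    (hJ : ∀ j ∈ t, Tendsto (f j) atTop (𝓝 (L j)))
    (hnotJ : ∀ j ∈ s, j ∉ t → Tendsto (f j) atTop atBot) :
    Tendsto (fun n => s.sup' (Finset.Nonempty.mono hts ht) (fun j => f j n)) atTop (𝓝 (t.sup' ht L)) := by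
  obtain ⟨j₀, hj₀⟩ := id ht
  have hev : ∀ᶠ n in atTop, ∀ j ∈ s, j ∉ t → f j n ≤ f j₀ n := by
    rw [Filter.eventually_all_finset s]
    intro j hj
    by_cases hjt : j ∈ t
    · exact Eventually.of_forall fun n hn => absurd hjt hn
    · have h1 : ∀ᶠ n in atTop, f j n ≤ L j₀ - 1 :=
        (hnotJ j hj hjt).eventually_le_atBot (L j₀ - 1)
      have h2 : ∀ᶠ n in atTop, L j₀ - 1 ≤ f j₀ n :=
        (hJ j₀ hj₀).eventually (eventually_ge_nhds (by linarith))
      filter_upwards [h1, h2] with n hn1 hn2 _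
      linarith
  have heq : ∀ᶠ n in atTop, s.sup' (Finset.Nonempty.mono hts ht) (fun j => f j n)
      = t.sup' ⟨j₀, hj₀⟩ (fun j => f j n) := by
    filter_upwards [hev] with n hn
    apply sup'_subset_eq s t hts
    intro j hj
    by_cases hjt : j ∈ t
    · exact ⟨j, hjt, le_rfl⟩
    · exact ⟨j₀, hj₀, hn j hj hjt⟩
  exact Tendsto.congr' (heq.mono fun n hn => hn.symm) (tendsto_finset_sup'_s12 t ⟨j₀, hj₀⟩ f L hJ)

private lemma isHorofunction_of_unbounded {M : Type*} [MetricSpace M] [ProperSpace M]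
    (geo : IsGeodesicSpace M) (b : M) (w : ℕ → M) (g : M → ℝ)
    (hw : HoroLim b w g) (hd : Tendsto (fun n => dist b (w n)) atTop atTop) :
    IsHorofunction b g := by
  refine ⟨⟨w, hw⟩, fun x hgx => ?_⟩
  have hdx : ∀ᶠ n in atTop, 1 ≤ dist x (w n) := by
    filter_upwards [hd.eventually_ge_atTop (dist b x + 1)] with n hn
    have := dist_triangle b x (w n); linarith
  obtain ⟨N, hN⟩ := eventually_atTop.1 hdx
  choose γ h0 h1 hiso using fun n => geo x (w n)
  set z : ℕ → M := fun n => if h : N ≤ n then γ n 1 else x with hzdef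
  have h01 : ∀ n, N ≤ n → (1:ℝ) ∈ Set.Icc (0:ℝ) (dist x (w n)) :=
    fun n hn => ⟨by norm_num, hN n hn⟩
  have hz1 : ∀ n, N ≤ n → dist x (z n) = 1 := by
    intro n hn
    simp only [hzdef, dif_pos hn]
    have h00 : (0:ℝ) ∈ Set.Icc (0:ℝ) (dist x (w n)) :=
      ⟨le_rfl, le_trans (by norm_num) (hN n hn)⟩
    have := hiso n 0 h00 1 (h01 n hn)
    rw [h0 n] at this
    rw [this]; norm_num
  have hzw : ∀ n, N ≤ n → dist (z n) (w n) = dist x (w n) - 1 := by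
    intro n hn
    simp only [hzdef, dif_pos hn]
    have hD : dist x (w n) ∈ Set.Icc (0:ℝ) (dist x (w n)) := ⟨dist_nonneg, le_rfl⟩
    have := hiso n 1 (h01 n hn) _ hD
    rw [h1 n] at this
    rw [this, abs_of_nonpos (by linarith [hN n hn])]; ring
  have hzball : ∀ n, z n ∈ Metric.closedBall x 1 := by
    intro n
    by_cases hn : N ≤ n
    · rw [Metric.mem_closedBall, dist_comm, hz1 n hn]
    · have : z n = x := by simp only [hzdef]; rw [dif_neg hn]
      rw [Metric.mem_closedBall, this, dist_self]; norm_num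
  obtain ⟨zl, _, ψ, hψ, hzt⟩ := (isCompact_closedBall x 1).tendsto_subseq hzball
  have hψt : Tendsto ψ atTop atTop := hψ.tendsto_atTop
  have hA : Tendsto (fun k => horo b (w (ψ k)) (z (ψ k))) atTop (𝓝 (g x - 1)) := by
    have hEv : ∀ᶠ k in atTop, horo b (w (ψ k)) x - 1 = horo b (w (ψ k)) (z (ψ k)) := by
      filter_upwards [hψt.eventually_ge_atTop N] with k hk
      simp only [horo]
      rw [hzw (ψ k) hk]; ring
    exact Tendsto.congr' hEv (((hw x).comp hψt).sub tendsto_const_nhds)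
  have hdist0 : Tendsto (fun k => dist (z (ψ k)) zl) atTop (𝓝 0) :=
    tendsto_iff_dist_tendsto_zero.1 hzt
  have hB : Tendsto (fun k => horo b (w (ψ k)) (z (ψ k))) atTop (𝓝 (g zl)) := by
    have h2 : Tendsto (fun k => horo b (w (ψ k)) (z (ψ k)) - horo b (w (ψ k)) zl)
        atTop (𝓝 0) :=
      squeeze_zero_norm (fun k => horo_lip_s12 b (w (ψ k)) (z (ψ k)) zl) hdist0
    have := h2.add ((hw zl).comp hψt)
    simpa using this
  have key : g zl = g x - 1 := tendsto_nhds_unique hB hA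
  have hxzl : dist x zl = 1 := by
    have hc : Tendsto (fun k => dist x (z (ψ k))) atTop (𝓝 (dist x zl)) :=
      (Continuous.dist continuous_const continuous_id).continuousAt.tendsto.comp hzt
    have hEv : ∀ᶠ k in atTop, dist x (z (ψ k)) = 1 := by
      filter_upwards [hψt.eventually_ge_atTop N] with k hk using hz1 (ψ k) hk
    exact tendsto_nhds_unique (Tendsto.congr' hEv hc) tendsto_const_nhds
  rw [hgx] at key
  simp only [horo] at key
  rw [dist_comm zl x, hxzl, dist_self] at key
  linarith

private lemma calib {M : Type*} [MetricSpace M] (geo : IsGeodesicSpace M) (b : M) (x : ℕ → M)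
    (hx : IsAlmostGeodesicSeq x) (g : M → ℝ) (hg : HoroLim b x g) :
    ∃ (W : ℝ → M) (s₀ : ℝ),
      (∀ s, s₀ ≤ s → dist b (W s) = s) ∧
      (∀ ε > (0:ℝ), ∃ S, s₀ ≤ S ∧ ∀ s s', S ≤ s → s ≤ s' →
        dist (W s) (W s') ≤ s' - s + ε) ∧
      (∀ z, Tendsto (fun s => horo b (W s) z) atTop (𝓝 (g z))) := by
  -- (1) u converges
  set u : ℕ → ℝ := fun n => dist (x n) (x 0) - dist b (x n) with hu
  have hub : ∀ n, |u n| ≤ dist (x 0) b := by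
    intro n
    have := abs_dist_sub_le (x 0) b (x n)
    rw [dist_comm (x 0) (x n)] at this
    simpa [hu, dist_comm] using this
  obtain ⟨L, hL⟩ : ∃ L, Tendsto u atTop (𝓝 L) := by
    refine exists_tendsto_of_almost_mono u (dist (x 0) b) (fun n => (abs_le.1 (hub n)).2) ?_
    intro ε hε
    obtain ⟨N, hN⟩ := hx.2 ε hε
    refine ⟨N, fun k m hk hkm => ?_⟩
    have h1 := hN m k hk hkm
    have h2 := dist_triangle b (x k) (x m)
    rw [dist_comm (x m) (x k)] at h1
    simp only [hu]
    linarith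
  -- (2) dist b (x n) → ∞
  have hd : Tendsto (fun n => dist b (x n)) atTop atTop := by
    apply tendsto_atTop_mono (fun n => ?_)
      (tendsto_atTop_add_const_right _ (-(dist (x 0) b)) hx.1)
    have := (abs_le.1 (hub n)).2
    simp only [hu] at this
    linarith
  -- (4) key estimate
  have hE : ∀ ε > (0:ℝ), ∃ N, ∀ k m, N ≤ k → k ≤ m →
      dist (x k) (x m) ≤ dist b (x m) - dist b (x k) + ε := by
    intro ε hε
    obtain ⟨N1, hN1⟩ := hx.2 (ε/2) (by linarith)
    obtain ⟨N2, hN2⟩ := (Metric.tendsto_atTop.1 hL) (ε/4) (by linarith)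
    refine ⟨max N1 N2, fun k m hk hkm => ?_⟩
    have h1 := hN1 m k (le_trans (le_max_left _ _) hk) hkm
    have h2 := hN2 k (le_trans (le_max_right _ _) hk)
    have h3 := hN2 m (le_trans (le_trans (le_max_right _ _) hk) hkm)
    rw [Real.dist_eq] at h2 h3
    have h2' := abs_le.1 (le_of_lt h2)
    have h3' := abs_le.1 (le_of_lt h3)
    rw [dist_comm (x m) (x k)] at h1
    simp only [hu] at h2' h3'
    -- dist(xk,xm) ≤ dist(xm,x0) - dist(xk,x0) + ε/2, u's within ε/4 of L
    have e1 : dist (x k) (x m) ≤ dist (x m) (x 0) - dist (x k) (x 0) + ε/2 := by linarith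
    have : dist (x m) (x 0) - dist (x k) (x 0)
        ≤ dist b (x m) - dist b (x k) + ε/2 := by
      obtain ⟨h2a, h2b⟩ := h2'; obtain ⟨h3a, h3b⟩ := h3'
      linarith
    linarith
  -- (5) stage thresholds
  have hE' : ∀ i : ℕ, ∃ N, ∀ k m, N ≤ k → k ≤ m →
      dist (x k) (x m) ≤ dist b (x m) - dist b (x k) + 1/(i+1) :=
    fun i => hE (1/(i+1)) (by positivity)
  choose Nf hNf using hE'
  -- (6) indices
  have step : ∀ (m : ℕ) (C : ℝ), ∃ n, m ≤ n ∧ C ≤ dist b (x n) := by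
    intro m C
    obtain ⟨N0, hN0⟩ := eventually_atTop.1 (hd.eventually_ge_atTop C)
    exact ⟨max m N0, le_max_left _ _, hN0 _ (le_max_right _ _)⟩
  choose F hF1 hF2 using step
  set k : ℕ → ℕ := fun i =>
    Nat.rec (F (Nf 0) 0) (fun i prev => F (max (prev+1) (Nf (i+1))) (dist b (x prev) + 1)) i
    with hk
  have hkrec : ∀ i, k (i+1) = F (max (k i + 1) (Nf (i+1))) (dist b (x (k i)) + 1) :=
    fun i => rfl
  have hkmono : StrictMono k := by
    apply strictMono_nat_of_lt_succ
    intro i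
    have := hF1 (max (k i + 1) (Nf (i+1))) (dist b (x (k i)) + 1)
    rw [← hkrec i] at this
    have := le_trans (le_max_left _ _) this
    omega
  have hkN : ∀ i, Nf i ≤ k i := by
    intro i
    cases i with
    | zero => exact hF1 (Nf 0) 0
    | succ i =>
        have := hF1 (max (k i + 1) (Nf (i+1))) (dist b (x (k i)) + 1)
        rw [← hkrec i] at this
        exact le_trans (le_max_right _ _) this
  set s : ℕ → ℝ := fun i => dist b (x (k i)) with hs
  have hsstep : ∀ i, s i + 1 ≤ s (i+1) := by
    intro i
    have := hF2 (max (k i + 1) (Nf (i+1))) (dist b (x (k i)) + 1)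
    rw [← hkrec i] at this
    simpa [hs] using this
  have hsmono : StrictMono s := strictMono_nat_of_lt_succ (fun i => by
    have := hsstep i; linarith)
  have hsge : ∀ i, s 0 + i ≤ s i := by
    intro i
    induction i with
    | zero => simp
    | succ i ih => have := hsstep i; push_cast; push_cast at ih; linarith
  have hsunbounded : ∀ t : ℝ, ∃ i, t < s (i+1) := by
    intro t
    obtain ⟨i, hi⟩ := exists_nat_gt (t - s 0)
    exact ⟨i, by have := hsge (i+1); push_cast at this; linarith⟩
  -- (7) geodesics
  choose γ hγ0 hγ1 hγiso using fun i => geo (x (k i)) (x (k (i+1)))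
  set D : ℕ → ℝ := fun i => dist (x (k i)) (x (k (i+1))) with hD
  have hD_low : ∀ i, s (i+1) - s i ≤ D i := by
    intro i
    have := dist_triangle b (x (k i)) (x (k (i+1)))
    simp only [hs, hD]; linarith
  have hD_up : ∀ i, D i ≤ s (i+1) - s i + 1/(i+1) := by
    intro i
    have := hNf i (k i) (k (i+1)) (hkN i) (le_of_lt (hkmono (Nat.lt_succ_self i)))
    simpa [hs, hD] using this
  -- (8) stage function
  set stage : ℝ → ℕ := fun t => Nat.find (hsunbounded t) with hstage
  have hstage1 : ∀ t, t < s (stage t + 1) := fun t => Nat.find_spec (hsunbounded t)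
  have hfind : ∀ t, stage t = Nat.find (hsunbounded t) := fun _ => rfl
  have hstage2 : ∀ t, s 0 ≤ t → s (stage t) ≤ t := by
    intro t ht
    cases h0 : stage t with
    | zero => exact ht
    | succ j =>
        have hj : j < Nat.find (hsunbounded t) := by rw [← hfind t, h0]; exact Nat.lt_succ_self j
        have := Nat.find_min (hsunbounded t) hj
        push_neg at this
        exact this
  have hstage_ge : ∀ (i : ℕ) (t : ℝ), s i ≤ t → i ≤ stage t := by
    intro i t ht
    by_contra hlt
    push_neg at hlt
    have h1 : stage t + 1 ≤ i := hlt
    have := le_trans (hsmono.monotone h1) ht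
    exact absurd (hstage1 t) (not_lt.2 this)
  -- (9) IVT points
  have hIVT : ∀ (i : ℕ) (t : ℝ), ∃ p, p ∈ Set.Icc 0 (D i) ∧
      (s i ≤ t → t ≤ s (i+1) → dist b (γ i p) = t) := by
    intro i t
    by_cases hcase : s i ≤ t ∧ t ≤ s (i+1)
    · have hcont : ContinuousOn (fun p => dist b (γ i p)) (Set.Icc 0 (D i)) := by
        have hlip : LipschitzOnWith 1 (γ i) (Set.Icc 0 (D i)) := by
          apply LipschitzOnWith.of_dist_le_mul
          intro p hp q hq
          rw [hγiso i p hp q hq, Real.dist_eq, NNReal.coe_one, one_mul]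
        exact (continuous_const.dist continuous_id).comp_continuousOn hlip.continuousOn
      have hmem : t ∈ Set.Icc (dist b (γ i 0)) (dist b (γ i (D i))) := by
        rw [hγ0 i, hγ1 i]
        exact ⟨by simpa [hs] using hcase.1, by simpa [hs] using hcase.2⟩
      obtain ⟨p, hp, hfp⟩ := intermediate_value_Icc dist_nonneg hcont hmem
      exact ⟨p, hp, fun _ _ => hfp⟩
    · exact ⟨0, ⟨le_rfl, dist_nonneg⟩, fun h1 h2 => absurd ⟨h1, h2⟩ hcase⟩
  choose P hPmem hPval using hIVT
  set W : ℝ → M := fun t => γ (stage t) (P (stage t) t) with hW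
  -- P1
  have P1 : ∀ t, s 0 ≤ t → dist b (W t) = t := fun t ht =>
    hPval (stage t) t (hstage2 t ht) (le_of_lt (hstage1 t))
  -- (11) parameter bounds
  have hstart : ∀ t, dist (x (k (stage t))) (W t) = P (stage t) t := by
    intro t
    have h00 : (0:ℝ) ∈ Set.Icc 0 (D (stage t)) := ⟨le_rfl, dist_nonneg⟩
    have := hγiso (stage t) 0 h00 (P (stage t) t) (hPmem (stage t) t)
    rw [hγ0 (stage t)] at this
    rw [this, abs_of_nonpos (by linarith [(hPmem (stage t) t).1])]
    ring
  have hendd : ∀ t, dist (W t) (x (k (stage t + 1))) = D (stage t) - P (stage t) t := by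
    intro t
    have hDD : D (stage t) ∈ Set.Icc 0 (D (stage t)) := ⟨dist_nonneg, le_rfl⟩
    have := hγiso (stage t) (P (stage t) t) (hPmem (stage t) t) (D (stage t)) hDD
    rw [hγ1 (stage t)] at this
    rw [this, abs_of_nonpos (by linarith [(hPmem (stage t) t).2])]
    ring
  have hp_low : ∀ t, s 0 ≤ t → t - s (stage t) ≤ P (stage t) t := by
    intro t ht
    have h1 := dist_triangle b (x (k (stage t))) (W t)
    rw [P1 t ht, hstart t] at h1
    simp only [hs] at h1 ⊢
    linarith
  have hp_up : ∀ t, s 0 ≤ t → P (stage t) t ≤ t - s (stage t) + 1/(stage t + 1) := by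
    intro t ht
    have h1 := dist_triangle b (W t) (x (k (stage t + 1)))
    rw [P1 t ht, hendd t] at h1
    have h2 := hD_up (stage t)
    simp only [hs] at h1 h2 ⊢
    push_cast at h2 ⊢
    linarith
  have hend1 : ∀ t, s 0 ≤ t →
      dist (W t) (x (k (stage t + 1))) ≤ s (stage t + 1) - t + 1/(stage t + 1) := by
    intro t ht
    rw [hendd t]
    have h2 := hD_up (stage t)
    have h3 := hp_low t ht
    push_cast at h2 ⊢
    linarith
  -- (12) P2 core
  have P2core : ∀ (i : ℕ) (t t' : ℝ), s i ≤ t → t ≤ t' →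
      dist (W t) (W t') ≤ t' - t + 3/(i+1) := by
    intro i t t' hit htt'
    have ht0 : s 0 ≤ t := le_trans (hsmono.monotone (Nat.zero_le i)) hit
    have ht0' : s 0 ≤ t' := le_trans ht0 htt'
    have hia : i ≤ stage t := hstage_ge i t hit
    have hic : stage t ≤ stage t' := hstage_ge (stage t) t' (le_trans (hstage2 t ht0) htt')
    have hiac : i ≤ stage t' := le_trans hia hic
    have hinv1 : (1:ℝ)/(stage t + 1) ≤ 1/(i+1) := by
      apply one_div_le_one_div_of_le (by positivity)
      have : (i:ℝ) ≤ stage t := by exact_mod_cast hia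
      linarith
    have hinv3 : (1:ℝ)/(stage t' + 1) ≤ 1/(i+1) := by
      apply one_div_le_one_div_of_le (by positivity)
      have : (i:ℝ) ≤ stage t' := by exact_mod_cast hiac
      linarith
    have hipos : (0:ℝ) < 1/(i+1) := by positivity
    rcases eq_or_lt_of_le hic with heq | hlt
    · -- same segment
      have e1 : W t' = γ (stage t) (P (stage t') t') := by
        show γ (stage t') (P (stage t') t') = _
        rw [← heq]
      have e2 : dist (W t) (W t') = |P (stage t) t - P (stage t') t'| := by
        rw [e1]
        exact hγiso (stage t) _ (hPmem (stage t) t) _ (heq ▸ hPmem (stage t') t')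
      have b1 := hp_low t ht0
      have b2 := hp_up t ht0
      have b3 := hp_low t' ht0'
      have b4 := hp_up t' ht0'
      have es : s (stage t) = s (stage t') := by rw [heq]
      have einv : (1:ℝ)/(stage t + 1) = 1/(stage t' + 1) := by rw [heq]
      have h3e : (3:ℝ)/((i:ℝ)+1) = 1/((i:ℝ)+1) + 1/((i:ℝ)+1) + 1/((i:ℝ)+1) := by ring
      rw [e2, abs_sub_le_iff]
      refine ⟨by linarith, by linarith⟩
    · -- different segments
      have h1 := hend1 t ht0
      have h2 : dist (x (k (stage t + 1))) (x (k (stage t')))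
          ≤ s (stage t') - s (stage t + 1) + 1/((stage t : ℝ) + 1 + 1) := by
        have := hNf (stage t + 1) (k (stage t + 1)) (k (stage t')) (hkN _) (hkmono.monotone hlt)
        have e : dist b (x (k (stage t'))) = s (stage t') := rfl
        have e' : dist b (x (k (stage t + 1))) = s (stage t + 1) := rfl
        rw [e, e'] at this
        refine le_trans this (le_of_eq ?_)
        push_cast
        ring
      have h3 : dist (x (k (stage t'))) (W t') = P (stage t') t' := hstart t'
      have h4 := hp_up t' ht0'
      have htri := dist_triangle4 (W t) (x (k (stage t + 1))) (x (k (stage t'))) (W t')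
      have hinv2 : (1:ℝ)/((stage t : ℝ) + 1 + 1) ≤ 1/(i+1) := by
        apply one_div_le_one_div_of_le (by positivity)
        have : (i:ℝ) ≤ stage t := by exact_mod_cast hia
        linarith
      rw [h3] at htri
      have hsum : (1:ℝ)/(stage t + 1) + 1/((stage t:ℝ)+1+1) + 1/(stage t' + 1) ≤ 3/(i+1) := by
        have : (3:ℝ)/(i+1) = 1/(i+1) + 1/(i+1) + 1/(i+1) := by ring
        linarith
      linarith
  -- (13) P2 packaged
  have P2 : ∀ ε > (0:ℝ), ∃ S, s 0 ≤ S ∧ ∀ t t', S ≤ t → t ≤ t' →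
      dist (W t) (W t') ≤ t' - t + ε := by
    intro ε hε
    obtain ⟨i, hi⟩ := exists_nat_gt (3/ε)
    refine ⟨s i, hsmono.monotone (Nat.zero_le i), fun t t' h1 h2 => ?_⟩
    refine le_trans (P2core i t t' h1 h2) ?_
    have h3 : (3:ℝ) < i * ε := (div_lt_iff₀ hε).1 hi
    have h4 : (3:ℝ)/((i:ℝ)+1) ≤ ε := by
      rw [div_le_iff₀ (by positivity)]
      nlinarith
    linarith
  -- (14) P3
  have P3 : ∀ z, Tendsto (fun t => horo b (W t) z) atTop (𝓝 (g z)) := by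
    intro z
    have hup : ∀ t, s 0 ≤ t →
        horo b (W t) z ≤ horo b (x (k (stage t))) z + 1/(stage t + 1) := by
      intro t ht
      have h1 := dist_triangle z (x (k (stage t))) (W t)
      rw [hstart t] at h1
      have h2 := hp_up t ht
      have e : dist b (x (k (stage t))) = s (stage t) := rfl
      simp only [horo]
      rw [P1 t ht, e]
      linarith
    have hlo : ∀ t, s 0 ≤ t →
        horo b (x (k (stage t + 1))) z - 1/(stage t + 1) ≤ horo b (W t) z := by
      intro t ht
      have h1 := dist_triangle z (W t) (x (k (stage t + 1)))
      have h2 := hend1 t ht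
      have e : dist b (x (k (stage t + 1))) = s (stage t + 1) := rfl
      simp only [horo]
      rw [P1 t ht, e]
      linarith
    have hstage_tendsto : Tendsto stage atTop atTop := by
      rw [tendsto_atTop]
      intro i
      filter_upwards [eventually_ge_atTop (s i)] with t ht
      exact hstage_ge i t ht
    have hF : Tendsto (fun a : ℕ => horo b (x (k a)) z) atTop (𝓝 (g z)) :=
      (hg z).comp hkmono.tendsto_atTop
    have hinv0 : Tendsto (fun a : ℕ => (1:ℝ)/(a+1)) atTop (𝓝 0) :=
      tendsto_one_div_add_atTop_nhds_zero_nat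
    have hupper : Tendsto (fun t => horo b (x (k (stage t))) z + 1/(stage t + 1))
        atTop (𝓝 (g z)) := by
      have h1 := (hF.add hinv0).comp hstage_tendsto
      simp only [Function.comp_def] at h1
      simpa using h1
    have hlower : Tendsto (fun t => horo b (x (k (stage t + 1))) z - 1/(stage t + 1))
        atTop (𝓝 (g z)) := by
      have h0 : Tendsto (fun a : ℕ => horo b (x (k (a+1))) z - 1/(a+1)) atTop (𝓝 (g z)) := by
        have := ((hg z).comp (hkmono.tendsto_atTop.comp (tendsto_add_atTop_nat 1))).sub hinv0
        simp only [Function.comp] at this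
        simpa using this
      have h1 := h0.comp hstage_tendsto
      simp only [Function.comp_def] at h1
      exact h1
    refine tendsto_of_tendsto_of_tendsto_of_le_of_le' hlower hupper ?_ ?_
    · filter_upwards [eventually_ge_atTop (s 0)] with t ht using hlo t ht
    · filter_upwards [eventually_ge_atTop (s 0)] with t ht using hup t ht
  exact ⟨W, s 0, P1, P2, P3⟩


/-- if in each factor all horofunctions are Busemann points and distinct
Busemann points lie at infinite detour distance, then all horofunctions of the product
are Busemann points. -/
theorem stmt_12 (q : ℕ) (N : Fin q → Type*) [∀ j, MetricSpace (N j)] [∀ j, ProperSpace (N j)]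
    (hgeo : ∀ j, IsGeodesicSpace (N j)) (b : ∀ j, N j)
    (hbus : ∀ j, ∀ h : N j → ℝ, IsHorofunction (b j) h → IsBusemannPoint (b j) h)
    (hdet : ∀ j, ∀ h h' : N j → ℝ, IsBusemannPoint (b j) h → IsBusemannPoint (b j) h' →
      h ≠ h' → detourDist (b j) h h' = ⊤)
    (h : (∀ j, N j) → ℝ) (hh : IsHorofunction b h) :
    IsBusemannPoint b h := by
  classical
  obtain ⟨⟨y, hy⟩, hnot⟩ := hh
  rcases Nat.eq_zero_or_pos q with hq0 | hq
  · -- trivial case q = 0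
    exfalso
    subst hq0
    apply hnot b
    funext z
    have hzb : z = b := Subsingleton.elim z b
    have h1 : Tendsto (fun n => horo b (y n) z) atTop (𝓝 (h z)) := hy z
    have h2 : (fun n => horo b (y n) z) = fun _ => 0 := by
      funext n
      have e1 : y n = b := Subsingleton.elim _ _
      rw [horo, e1, hzb, dist_self]
      norm_num
    rw [h2] at h1
    have h3 : h z = 0 := tendsto_nhds_unique h1 tendsto_const_nhds
    have h4 : dist z b = 0 := by rw [hzb, dist_self]
    simp [horo, h3, h4]
  haveI hne : Nonempty (Fin q) := ⟨⟨0, hq⟩⟩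
  have Hne : (Finset.univ : Finset (Fin q)).Nonempty := Finset.univ_nonempty
  -- Step 2: distances diverge
  have hdiv : Tendsto (fun n => dist b (y n)) atTop atTop := by
    by_contra hnotT
    rw [tendsto_atTop] at hnotT
    push_neg at hnotT
    obtain ⟨C, hC⟩ := hnotT
    have hfreq : ∃ᶠ n in atTop, y n ∈ Metric.closedBall b C := by
      apply hC.mono
      intro n hn
      rw [Metric.mem_closedBall, dist_comm]
      exact hn.le
    obtain ⟨yl, _, ψ, hψ, hconv⟩ := (isCompact_closedBall b C).tendsto_subseq' hfreq
    apply hnot yl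
    funext z
    have h1 : Tendsto (fun kk => horo b (y (ψ kk)) z) atTop (𝓝 (h z)) :=
      (hy z).comp hψ.tendsto_atTop
    have hcont : Continuous fun w : (∀ j, N j) => horo b w z :=
      (continuous_const.dist continuous_id).sub (continuous_const.dist continuous_id)
    have h2 : Tendsto (fun kk => horo b (y (ψ kk)) z) atTop (𝓝 (horo b yl z)) :=
      (hcont.tendsto yl).comp hconv
    exact tendsto_nhds_unique h1 h2
  -- Step 3: dense sequences and subsequence extraction
  have hdense : ∀ j, ∃ e : ℕ → N j, DenseRange e := fun j => by
    haveI : Nonempty (N j) := ⟨b j⟩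
    exact TopologicalSpace.exists_dense_seq (N j)
  choose e he using hdense
  set β : ℕ → Fin q → ℝ := fun n j => dist (b j) (y n j) - dist b (y n) with hβdef
  have hβle : ∀ n j, β n j ≤ 0 := by
    intro n j
    have := dist_le_pi_dist b (y n) j
    simp only [hβdef]; linarith
  set C : Fin q × ℕ → ℝ := fun p => dist (e p.1 p.2) (b p.1) with hCdef
  set Φ : ℕ → (Fin q → ℝ) × ((Fin q × ℕ) → ℝ) :=
    fun n => (fun j => Real.exp (β n j), fun p => horo (b p.1) (y n p.1) (e p.1 p.2)) with hΦdef
  have hmem : ∀ n, Φ n ∈ (Set.univ.pi fun _ : Fin q => Set.Icc (0:ℝ) 1) ×ˢ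
      (Set.univ.pi fun p : Fin q × ℕ => Set.Icc (-C p) (C p)) := by
    intro n
    rw [Set.mem_prod]
    constructor
    · intro j _
      exact ⟨(Real.exp_pos _).le, Real.exp_le_one_iff.2 (hβle n j)⟩
    · intro p _
      exact abs_le.1 (horo_bound (b p.1) (y n p.1) (e p.1 p.2))
  have hcomp : IsCompact ((Set.univ.pi fun _ : Fin q => Set.Icc (0:ℝ) 1) ×ˢ
      (Set.univ.pi fun p : Fin q × ℕ => Set.Icc (-C p) (C p))) :=
    (isCompact_univ_pi fun _ => isCompact_Icc).prod (isCompact_univ_pi fun _ => isCompact_Icc)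
  obtain ⟨lim, hlimmem, φ, hφ, hΦconv⟩ := hcomp.isSeqCompact hmem
  set Λ : Fin q → ℝ := lim.1 with hΛdef
  have hΛmem : ∀ j, Λ j ∈ Set.Icc (0:ℝ) 1 := fun j => hlimmem.1 j (Set.mem_univ j)
  have hconv1 : ∀ j, Tendsto (fun n => Real.exp (β (φ n) j)) atTop (𝓝 (Λ j)) := by
    intro j
    have h1 : Tendsto (fun n => (Φ (φ n)).1) atTop (𝓝 lim.1) :=
      (continuous_fst.tendsto lim).comp hΦconv
    exact ((continuous_apply j).tendsto lim.1).comp h1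
  have hconv2 : ∀ p : Fin q × ℕ,
      Tendsto (fun n => horo (b p.1) (y (φ n) p.1) (e p.1 p.2)) atTop (𝓝 (lim.2 p)) := by
    intro p
    have h1 : Tendsto (fun n => (Φ (φ n)).2) atTop (𝓝 lim.2) :=
      (continuous_snd.tendsto lim).comp hΦconv
    exact ((continuous_apply p).tendsto lim.2).comp h1
  -- Step 4: the offsets
  set α : Fin q → ℝ := fun j => -Real.log (Λ j) with hαdef
  have hβconv : ∀ j, Λ j ≠ 0 → Tendsto (fun n => β (φ n) j) atTop (𝓝 (-α j)) := by
    intro j hj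
    have hpos : 0 < Λ j := lt_of_le_of_ne (hΛmem j).1 (Ne.symm hj)
    have hlog := (Real.continuousAt_log (ne_of_gt hpos)).tendsto.comp (hconv1 j)
    simp only [Function.comp_def, Real.log_exp] at hlog
    simpa [hαdef] using hlog
  have hαnonneg : ∀ j, Λ j ≠ 0 → 0 ≤ α j := by
    intro j _
    have := Real.log_nonpos (hΛmem j).1 (hΛmem j).2
    simp only [hαdef]; linarith
  have hβbot : ∀ j, Λ j = 0 → Tendsto (fun n => β (φ n) j) atTop atBot := by
    intro j hj
    rw [tendsto_atBot]
    intro M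
    have h0 : Tendsto (fun n => Real.exp (β (φ n) j)) atTop (𝓝 0) := by
      have := hconv1 j; rwa [hj] at this
    have hev : ∀ᶠ n in atTop, Real.exp (β (φ n) j) < Real.exp M :=
      h0.eventually (eventually_lt_nhds (Real.exp_pos M))
    filter_upwards [hev] with n hn
    exact (Real.exp_lt_exp.1 hn).le
  -- the coordinate attaining the max
  have hβmax : ∀ n, ∃ j, β n j = 0 := by
    intro n
    obtain ⟨j, _, hjeq⟩ := Finset.exists_mem_eq_sup' Hne (fun j => dist (b j) (y n j))
    refine ⟨j, ?_⟩
    have hpi := dist_pi_sup' b (y n)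
    simp only [hβdef]
    rw [hpi, hjeq]; ring
  have hexp1 : ∀ n, Finset.univ.sup' Hne (fun j => Real.exp (β n j)) = 1 := by
    intro n
    apply le_antisymm
    · exact Finset.sup'_le _ _ fun j _ => Real.exp_le_one_iff.2 (hβle n j)
    · obtain ⟨j, hj⟩ := hβmax n
      have he1 : Real.exp (β n j) = 1 := by rw [hj, Real.exp_zero]
      rw [← he1]
      exact Finset.le_sup' (fun j => Real.exp (β n j)) (Finset.mem_univ j)
  have hsupΛ : Finset.univ.sup' Hne Λ = 1 := by
    have h1 : Tendsto (fun n => Finset.univ.sup' Hne (fun j => Real.exp (β (φ n) j)))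
        atTop (𝓝 (Finset.univ.sup' Hne Λ)) :=
      tendsto_finset_sup'_s12 _ Hne _ _ (fun j _ => hconv1 j)
    have h2 : (fun n => Finset.univ.sup' Hne (fun j => Real.exp (β (φ n) j)))
        = fun _ => (1:ℝ) := by
      funext n; exact hexp1 (φ n)
    rw [h2] at h1
    exact tendsto_nhds_unique h1 tendsto_const_nhds
  obtain ⟨j₀, _, hj₀⟩ := Finset.exists_mem_eq_sup' Hne Λ
  have hΛj₀ : Λ j₀ = 1 := by rw [← hj₀, hsupΛ]
  have hj₀ne : Λ j₀ ≠ 0 := by rw [hΛj₀]; exact one_ne_zero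
  have hαj₀ : α j₀ = 0 := by simp [hαdef, hΛj₀]
  -- Step 5: pointwise limits in each factor
  have hptwise : ∀ (j : Fin q) (z : N j), ∃ Lz,
      Tendsto (fun n => horo (b j) (y (φ n) j) z) atTop (𝓝 Lz) := by
    intro j z
    refine cauchySeq_tendsto_of_complete ?_
    rw [Metric.cauchySeq_iff]
    intro ε hε
    obtain ⟨m, hm⟩ := (he j).exists_dist_lt z (show (0:ℝ) < ε/4 by linarith)
    have hc := (hconv2 (j, m)).cauchySeq
    rw [Metric.cauchySeq_iff] at hc
    obtain ⟨Nc, hNc⟩ := hc (ε/4) (by linarith)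
    refine ⟨Nc, fun p hp p' hp' => ?_⟩
    have l1 := horo_lip_s12 (b j) (y (φ p) j) z (e j m)
    have l2 := horo_lip_s12 (b j) (y (φ p') j) z (e j m)
    have l3 := hNc p hp p' hp'
    rw [Real.dist_eq] at l3 ⊢
    have t1 := abs_sub_le (horo (b j) (y (φ p) j) z) (horo (b j) (y (φ p) j) (e j m))
        (horo (b j) (y (φ p') j) z)
    have t2 := abs_sub_le (horo (b j) (y (φ p) j) (e j m))
        (horo (b j) (y (φ p') j) (e j m)) (horo (b j) (y (φ p') j) z)
    have l2' : |horo (b j) (y (φ p') j) (e j m) - horo (b j) (y (φ p') j) z|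
        ≤ dist z (e j m) := by
      rw [abs_sub_comm]; exact l2
    linarith
  choose g hg using hptwise
  -- Step 5b: in active coordinates the factor distances diverge
  have hdivj : ∀ j, Λ j ≠ 0 → Tendsto (fun n => dist (b j) (y (φ n) j)) atTop atTop := by
    intro j hj
    have heq2 : (fun n => dist (b j) (y (φ n) j))
        = fun n => β (φ n) j + dist b (y (φ n)) := by
      funext n; simp only [hβdef]; ring
    rw [heq2]
    refine tendsto_atTop_add_left_of_le' atTop (-α j - 1) ?_ (hdiv.comp hφ.tendsto_atTop)
    exact (hβconv j hj).eventually (eventually_ge_nhds (by linarith))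
  have hbusj : ∀ j, Λ j ≠ 0 → IsBusemannPoint (b j) (g j) := fun j hj =>
    hbus j (g j) (isHorofunction_of_unbounded (hgeo j) (b j) _ (g j)
      (fun z => hg j z) (hdivj j hj))
  -- Step 6: calibrated paths
  have hcal : ∀ j, Λ j ≠ 0 → ∃ (W : ℝ → N j) (s₀ : ℝ),
      (∀ s, s₀ ≤ s → dist (b j) (W s) = s) ∧
      (∀ ε > (0:ℝ), ∃ S, s₀ ≤ S ∧ ∀ s s', S ≤ s → s ≤ s' →
        dist (W s) (W s') ≤ s' - s + ε) ∧
      (∀ z, Tendsto (fun s => horo (b j) (W s) z) atTop (𝓝 (g j z))) := by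
    intro j hj
    obtain ⟨_, x, hxag, hxlim⟩ := hbusj j hj
    exact calib (hgeo j) (b j) x hxag (g j) hxlim
  haveI : ∀ j, Nonempty (N j) := fun j => ⟨b j⟩
  choose! W s₀ hW1 hW2 hW3 using hcal
  -- Step 7: the product almost geodesic
  set Jset : Finset (Fin q) := Finset.univ.filter (fun j => Λ j ≠ 0) with hJdef
  have hj₀J : j₀ ∈ Jset := by simp [hJdef, hj₀ne]
  have hJne : Jset.Nonempty := ⟨j₀, hj₀J⟩
  have hJsub : Jset ⊆ Finset.univ := Finset.subset_univ _
  have hJmem : ∀ j, j ∈ Jset ↔ Λ j ≠ 0 := by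
    intro j; simp [hJdef]
  set T0 : ℝ := max 1 (Finset.univ.sup' Hne
    (fun j => if Λ j ≠ 0 then s₀ j + α j else 0)) with hT0def
  set t : ℕ → ℝ := fun n => T0 + n with htdef
  have htval : ∀ n : ℕ, t n = T0 + n := fun n => rfl
  have htmono : ∀ k m : ℕ, k ≤ m → t k ≤ t m := by
    intro k m hkm
    have : (k:ℝ) ≤ m := by exact_mod_cast hkm
    simp only [htdef]; linarith
  have ht1 : ∀ n, 1 ≤ t n := by
    intro n
    have h1 : (1:ℝ) ≤ T0 := le_max_left _ _
    have h2 : (0:ℝ) ≤ n := Nat.cast_nonneg n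
    simp only [htdef]; linarith
  have hts0 : ∀ (n : ℕ) (j), Λ j ≠ 0 → s₀ j + α j ≤ t n := by
    intro n j hj
    have h1 : s₀ j + α j ≤ Finset.univ.sup' Hne
        (fun j => if Λ j ≠ 0 then s₀ j + α j else 0) := by
      have := Finset.le_sup' (f := fun j => if Λ j ≠ 0 then s₀ j + α j else 0)
        (Finset.mem_univ j)
      rwa [if_pos hj] at this
    have h2 : (0:ℝ) ≤ n := Nat.cast_nonneg n
    have h3 : s₀ j + α j ≤ T0 := le_trans h1 (le_max_right _ _)
    simp only [htdef]; linarith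
  set Y : ℕ → ∀ j, N j := fun n j => if hj : Λ j ≠ 0 then W j (t n - α j) else b j with hYdef
  have hYJ : ∀ (n : ℕ) (j) (hj : Λ j ≠ 0), Y n j = W j (t n - α j) := by
    intro n j hj
    simp only [hYdef]
    rw [dif_pos hj]
  have hYnJ : ∀ (n : ℕ) (j), Λ j = 0 → Y n j = b j := by
    intro n j hj
    simp only [hYdef]
    rw [dif_neg (fun hne => hne hj)]
  have hYdist : ∀ (n : ℕ) (j), Λ j ≠ 0 → dist (b j) (Y n j) = t n - α j := by
    intro n j hj
    rw [hYJ n j hj]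
    exact hW1 j hj _ (by have := hts0 n j hj; linarith)
  have hYb : ∀ n, dist b (Y n) = t n := by
    intro n
    apply le_antisymm
    · apply (dist_pi_le_iff (le_trans zero_le_one (ht1 n))).2
      intro j
      by_cases hj : Λ j ≠ 0
      · rw [hYdist n j hj]
        have := hαnonneg j hj; linarith
      · rw [hYnJ n j (not_not.1 hj), dist_self]
        linarith [ht1 n]
    · have hle := dist_le_pi_dist b (Y n) j₀
      rw [hYdist n j₀ hj₀ne, hαj₀] at hle
      linarith
  have hcoordlow : ∀ (k m : ℕ) (j), Λ j ≠ 0 → k ≤ m →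
      t m - t k ≤ dist (Y k j) (Y m j) := by
    intro k m j hj _
    have h1 := dist_triangle (b j) (Y k j) (Y m j)
    rw [hYdist k j hj, hYdist m j hj] at h1
    linarith
  have hcoordup : ∀ j, Λ j ≠ 0 → ∀ ε > (0:ℝ), ∃ K : ℕ, ∀ k m, K ≤ k → k ≤ m →
      dist (Y k j) (Y m j) ≤ t m - t k + ε := by
    intro j hj ε hε
    obtain ⟨S, _, hS⟩ := hW2 j hj ε hε
    obtain ⟨K, hK⟩ := exists_nat_ge (S + α j - T0)
    refine ⟨K, fun k m hk hkm => ?_⟩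
    have h2 : (K:ℝ) ≤ k := by exact_mod_cast hk
    have hSk : S ≤ t k - α j := by simp only [htdef]; linarith
    rw [hYJ k j hj, hYJ m j hj]
    have h3 := hS (t k - α j) (t m - α j) hSk (by have := htmono k m hkm; linarith)
    linarith
  have hprodlow : ∀ k m : ℕ, k ≤ m → t m - t k ≤ dist (Y k) (Y m) :=
    fun k m hkm => le_trans (hcoordlow k m j₀ hj₀ne hkm) (dist_le_pi_dist (Y k) (Y m) j₀)
  have hprodup : ∀ ε > (0:ℝ), ∃ K : ℕ, ∀ k m, K ≤ k → k ≤ m →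
      dist (Y k) (Y m) ≤ t m - t k + ε := by
    intro ε hε
    have hKj : ∀ j, ∃ K : ℕ, Λ j ≠ 0 → ∀ k m, K ≤ k → k ≤ m →
        dist (Y k j) (Y m j) ≤ t m - t k + ε := by
      intro j
      by_cases hj : Λ j ≠ 0
      · obtain ⟨K, hK⟩ := hcoordup j hj ε hε
        exact ⟨K, fun _ => hK⟩
      · exact ⟨0, fun hjj => absurd hjj hj⟩
    choose Kj hKj using hKj
    refine ⟨Finset.univ.sup Kj, fun k m hk hkm => ?_⟩
    have htnn : 0 ≤ t m - t k + ε := by have := htmono k m hkm; linarith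
    apply (dist_pi_le_iff htnn).2
    intro j
    by_cases hj : Λ j ≠ 0
    · exact hKj j hj k m (le_trans (Finset.le_sup (Finset.mem_univ j)) hk) hkm
    · rw [hYnJ k j (not_not.1 hj), hYnJ m j (not_not.1 hj), dist_self]
      have := htmono k m hkm; linarith
  -- convergence of the anchor defects
  have hv : ∀ j, Λ j ≠ 0 → ∃ Lv, Tendsto
      (fun n => dist (Y n j) (Y 0 j) - (t n - t 0)) atTop (𝓝 Lv) := by
    intro j hj
    have hv0 : ∀ n, 0 ≤ dist (Y n j) (Y 0 j) - (t n - t 0) := by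
      intro n
      have h1 := dist_triangle (b j) (Y 0 j) (Y n j)
      rw [hYdist n j hj, hYdist 0 j hj, dist_comm (Y 0 j) (Y n j)] at h1
      linarith
    have ham : ∀ ε > (0:ℝ), ∃ Nn : ℕ, ∀ k m, Nn ≤ k → k ≤ m →
        -(dist (Y k j) (Y 0 j) - (t k - t 0)) - ε
          ≤ -(dist (Y m j) (Y 0 j) - (t m - t 0)) := by
      intro ε hε
      obtain ⟨K, hK⟩ := hcoordup j hj ε hε
      refine ⟨K, fun k m hk hkm => ?_⟩
      have h1 := dist_triangle (Y m j) (Y k j) (Y 0 j)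
      have h2 := hK k m hk hkm
      rw [dist_comm (Y m j) (Y k j)] at h1
      linarith
    obtain ⟨L1, hL1⟩ := exists_tendsto_of_almost_mono
      (fun n => -(dist (Y n j) (Y 0 j) - (t n - t 0))) 0
      (fun n => by
        show -(dist (Y n j) (Y 0 j) - (t n - t 0)) ≤ (0:ℝ)
        linarith [hv0 n]) ham
    exact ⟨-L1, by simpa using hL1.neg⟩
  choose! Lv hLv using hv
  -- almost geodesic, part 1
  have hag1 : Tendsto (fun n => dist (Y n) (Y 0)) atTop atTop := by
    have base : Tendsto (fun n : ℕ => (n:ℝ)) atTop atTop := tendsto_natCast_atTop_atTop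
    apply tendsto_atTop_mono (fun n => ?_) base
    have h1 := hprodlow 0 n (Nat.zero_le n)
    rw [dist_comm (Y 0) (Y n)] at h1
    have h2 : t n - t 0 = n := by simp [htdef]
    linarith
  -- almost geodesic, part 2
  have hag2 : ∀ ε > (0 : ℝ), ∃ Nn : ℕ, ∀ m k : ℕ, Nn ≤ k → k ≤ m →
      dist (Y m) (Y k) + dist (Y k) (Y 0) - dist (Y m) (Y 0) < ε := by
    intro ε hε
    obtain ⟨K1, hK1⟩ := hprodup (ε/3) (by linarith)
    have hKv : ∀ j, ∃ K : ℕ, Λ j ≠ 0 → ∀ a c, K ≤ a → K ≤ c →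
        |(dist (Y a j) (Y 0 j) - (t a - t 0)) - (dist (Y c j) (Y 0 j) - (t c - t 0))|
          ≤ ε/3 := by
      intro j
      by_cases hj : Λ j ≠ 0
      · have hc := (hLv j hj).cauchySeq
        rw [Metric.cauchySeq_iff] at hc
        obtain ⟨K, hK⟩ := hc (ε/3) (by linarith)
        refine ⟨K, fun _ a c ha hc' => ?_⟩
        have := hK a ha c hc'
        rw [Real.dist_eq] at this
        exact this.le
      · exact ⟨0, fun hjj => absurd hjj hj⟩
    choose Kv hKv using hKv
    refine ⟨max (max K1 (Finset.univ.sup Kv)) 1, fun m k hk hkm => ?_⟩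
    have hk1 : 1 ≤ k := le_trans (le_max_right _ _) hk
    have hkK1 : K1 ≤ k := le_trans (le_trans (le_max_left _ _) (le_max_left _ _)) hk
    have hkKv : ∀ j, Kv j ≤ k := fun j =>
      le_trans (le_trans (Finset.le_sup (Finset.mem_univ j)) (le_max_right _ _))
        (le_trans (le_max_left _ _) hk)
    obtain ⟨j₁, _, hj₁⟩ := Finset.exists_mem_eq_sup' Hne (fun j => dist (Y k j) (Y 0 j))
    have hdk0 : dist (Y k) (Y 0) = dist (Y k j₁) (Y 0 j₁) := by
      rw [dist_pi_sup' (Y k) (Y 0)]; exact hj₁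
    have hj₁J : Λ j₁ ≠ 0 := by
      intro hj₁0
      have h0 : dist (Y k j₁) (Y 0 j₁) = 0 := by
        rw [hYnJ k j₁ hj₁0, hYnJ 0 j₁ hj₁0, dist_self]
      have h1 : dist (Y k j₀) (Y 0 j₀) ≤ dist (Y k j₁) (Y 0 j₁) := by
        rw [← hj₁]
        exact Finset.le_sup' (fun j => dist (Y k j) (Y 0 j)) (Finset.mem_univ j₀)
      have h2 := hcoordlow 0 k j₀ hj₀ne (Nat.zero_le k)
      rw [dist_comm (Y 0 j₀) (Y k j₀)] at h2
      have h3 : t k - t 0 = k := by simp [htdef]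
      have h4 : (1:ℝ) ≤ k := by exact_mod_cast hk1
      linarith
    have d1 : dist (Y m) (Y k) ≤ t m - t k + ε/3 := by
      rw [dist_comm]; exact hK1 k m hkK1 hkm
    have d3 : t m - t 0 + (dist (Y m j₁) (Y 0 j₁) - (t m - t 0)) ≤ dist (Y m) (Y 0) := by
      have := dist_le_pi_dist (Y m) (Y 0) j₁
      linarith
    have d4 := hKv j₁ hj₁J k m (hkKv j₁) (le_trans (hkKv j₁) hkm)
    rw [abs_le] at d4
    have d2 : dist (Y k) (Y 0)
        = (t k - t 0) + (dist (Y k j₁) (Y 0 j₁) - (t k - t 0)) := by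
      rw [hdk0]; ring
    obtain ⟨d4a, d4b⟩ := d4
    linarith
  -- identification of h along the subsequence
  have hlimJ : ∀ z : (∀ j, N j), h z = Jset.sup' hJne (fun j => g j (z j) - α j) := by
    intro z
    have hfull : Tendsto (fun n => horo b (y (φ n)) z) atTop (𝓝 (h z)) :=
      (hy z).comp hφ.tendsto_atTop
    have hexpand : ∀ n, horo b (y (φ n)) z = Finset.univ.sup' Hne
        (fun j => horo (b j) (y (φ n) j) (z j) + β (φ n) j) := by
      intro n
      simp only [horo]
      rw [dist_pi_sup' z (y (φ n)), sup'_sub_const]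
      congr 1
      funext j
      simp only [hβdef]
      ring
    have hJlim : ∀ j ∈ Jset, Tendsto (fun n => horo (b j) (y (φ n) j) (z j) + β (φ n) j)
        atTop (𝓝 (g j (z j) - α j)) := by
      intro j hjm
      have hjne : Λ j ≠ 0 := (hJmem j).1 hjm
      have := (hg j (z j)).add (hβconv j hjne)
      simpa [sub_eq_add_neg] using this
    have hnJlim : ∀ j ∈ Finset.univ, j ∉ Jset →
        Tendsto (fun n => horo (b j) (y (φ n) j) (z j) + β (φ n) j) atTop atBot := by
      intro j _ hjm
      have hj0 : Λ j = 0 := not_not.1 (fun hc => hjm ((hJmem j).2 hc))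
      refine tendsto_atBot_add_left_of_ge' atTop (g j (z j) + 1) ?_ (hβbot j hj0)
      exact (hg j (z j)).eventually (eventually_le_nhds (by linarith))
    have hsup := tendsto_sup'_with_bot Finset.univ Jset hJsub hJne
      (fun j n => horo (b j) (y (φ n) j) (z j) + β (φ n) j)
      (fun j => g j (z j) - α j) hJlim hnJlim
    refine tendsto_nhds_unique ?_ hsup
    exact Tendsto.congr (fun n => hexpand n) hfull
  -- HoroLim for the constructed sequence
  have hYlim : HoroLim b Y h := by
    intro z
    rw [hlimJ z]
    have hexpand : ∀ n, horo b (Y n) z = Finset.univ.sup' Hne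
        (fun j => dist (z j) (Y n j) - t n) := by
      intro n
      simp only [horo]
      rw [dist_pi_sup' z (Y n), hYb n, sup'_sub_const]
    have httop : Tendsto t atTop atTop := by
      have heq3 : t = fun n : ℕ => (n:ℝ) + T0 := by funext n; simp [htdef]; ring
      rw [heq3]
      exact tendsto_atTop_add_const_right _ _ tendsto_natCast_atTop_atTop
    have hJlim : ∀ j ∈ Jset, Tendsto (fun n => dist (z j) (Y n j) - t n) atTop
        (𝓝 (g j (z j) - α j)) := by
      intro j hjm
      have hj : Λ j ≠ 0 := (hJmem j).1 hjm
      have heq4 : ∀ n, dist (z j) (Y n j) - t n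
          = horo (b j) (W j (t n - α j)) (z j) - α j := by
        intro n
        have h1 : dist (b j) (W j (t n - α j)) = t n - α j := by
          rw [← hYJ n j hj]; exact hYdist n j hj
        simp only [horo]
        rw [h1, ← hYJ n j hj]
        ring
      have hcomp2 : Tendsto (fun n => t n - α j) atTop atTop :=
        tendsto_atTop_add_const_right _ _ httop
      have hco := ((hW3 j hj (z j)).comp hcomp2).sub (tendsto_const_nhds (x := α j))
      refine Tendsto.congr (fun n => (heq4 n).symm) ?_
      exact hco
    have hnJ : ∀ j ∈ Finset.univ, j ∉ Jset →
        Tendsto (fun n => dist (z j) (Y n j) - t n) atTop atBot := by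
      intro j _ hjm
      have hj0 : Λ j = 0 := not_not.1 (fun hc => hjm ((hJmem j).2 hc))
      have heq5 : (fun n => dist (z j) (Y n j) - t n)
          = fun n => dist (z j) (b j) + -(t n) := by
        funext n; rw [hYnJ n j hj0]; ring
      rw [heq5]
      exact tendsto_atBot_add_const_left _ _ (tendsto_neg_atTop_atBot.comp httop)
    have hsup := tendsto_sup'_with_bot Finset.univ Jset hJsub hJne
      (fun j n => dist (z j) (Y n j) - t n) (fun j => g j (z j) - α j) hJlim hnJ
    exact Tendsto.congr (fun n => (hexpand n).symm) hsup
  exact ⟨⟨⟨y, hy⟩, hnot⟩, Y, ⟨hag1, hag2⟩, hYlim⟩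
end
end

section
/- Consider ℝ^n with the sup-metric d_∞(x,y) = max_{1≤j≤n} |x_j − y_j| and basepoint 0. A function h : ℝ^n → ℝ is a horofunction of (ℝ^n, d_∞) if and only if there exist a non-empty set J ⊆ {1,…,n}, signs ε_j ∈ {−1,+1} for j ∈ J, and α ∈ ℝ^J with min_{j∈J} α_j = 0 such that h(x) = max_{j∈J} (ε_j x_j − α_j) for all x ∈ ℝ^n. Moreover, every horofunction of (ℝ^n, d_∞) is a Busemann point. -/
open Filter Topology

noncomputable section

open Finset in
lemma stmt15_dist_eq_sup' {n : ℕ} (hn : (Finset.univ : Finset (Fin n)).Nonempty) (x y : Fin n → ℝ) :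
    dist x y = Finset.univ.sup' hn (fun j => |x j - y j|) := by
  rw [dist_pi_def, ← Finset.sup'_eq_sup hn]
  rw [Finset.comp_sup'_eq_sup'_comp hn (f := fun j => nndist (x j) (y j)) (g := NNReal.toReal) (fun a b => rfl)]
  simp [Function.comp_def, coe_nndist, Real.dist_eq]

lemma stmt15_sup'_sub_const {ι : Type*} {s : Finset ι} (hs : s.Nonempty) (f : ι → ℝ) (c : ℝ) :
    s.sup' hs (fun j => f j - c) = s.sup' hs f - c := by
  rw [Finset.comp_sup'_eq_sup'_comp hs (f := f) (g := fun x => x - c) (fun a b => by simp [max_sub_sub_right])]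
  rfl


lemma stmt15_backward {n : ℕ} (h : (Fin n → ℝ) → ℝ) (J : Finset (Fin n)) (hJ : J.Nonempty)
    (ε α : Fin n → ℝ) (hε : ∀ j ∈ J, ε j = 1 ∨ ε j = -1) (hα : ∀ j ∈ J, 0 ≤ α j)
    (hmin : ∃ j ∈ J, α j = 0) (hh : ∀ x, h x = J.sup' hJ fun j => ε j * x j - α j) :
    IsBusemannPoint 0 h := by
  classical
  obtain ⟨j₀, hj₀J, hj₀⟩ := hmin
  have hn : (Finset.univ : Finset (Fin n)).Nonempty := ⟨j₀, Finset.mem_univ _⟩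
  have hε1 : ∀ j ∈ J, |ε j| = 1 := by
    intro j hj; rcases hε j hj with h' | h' <;> simp [h']
  have hεsq : ∀ j ∈ J, ε j * ε j = 1 := by
    intro j hj; rcases hε j hj with h' | h' <;> rw [h'] <;> ring
  have hεlb : ∀ j ∈ J, ∀ t : ℝ, -|t| ≤ ε j * t := by
    intro j hj t
    rcases hε j hj with h' | h'
    · rw [h', one_mul]; exact neg_abs_le _
    · rw [h', neg_one_mul]; linarith [le_abs_self t]
  set y : ℕ → Fin n → ℝ := fun k j => if j ∈ J then -ε j * max ((k : ℝ) - α j) 0 else 0 with hy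
  have habs : ∀ (k : ℕ) (j : Fin n), |y k j| ≤ (k : ℝ) := by
    intro k j
    by_cases hj : j ∈ J
    · simp only [hy, if_pos hj, abs_mul, abs_neg, hε1 j hj, one_mul]
      rw [abs_of_nonneg (le_max_right _ _)]
      exact max_le (by linarith [hα j hj]) (Nat.cast_nonneg k)
    · simp only [hy, if_neg hj, abs_zero]; exact Nat.cast_nonneg k
  have habs0 : ∀ k : ℕ, |y k j₀| = (k : ℝ) := by
    intro k
    simp only [hy, if_pos hj₀J, hj₀, sub_zero, abs_mul, abs_neg, hε1 j₀ hj₀J, one_mul]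
    rw [abs_of_nonneg (le_max_right _ _), max_eq_left (Nat.cast_nonneg k)]
  have hdist0 : ∀ k : ℕ, dist (y k) 0 = (k : ℝ) := by
    intro k
    rw [stmt15_dist_eq_sup' hn]
    apply le_antisymm
    · exact Finset.sup'_le _ _ fun j _ => by simpa using habs k j
    · have := Finset.le_sup' (fun j => |y k j - (0 : Fin n → ℝ) j|) (Finset.mem_univ j₀)
      simp only [Pi.zero_apply, sub_zero, habs0 k] at this ⊢; exact this
  have hdistmk : ∀ m k : ℕ, k ≤ m → dist (y m) (y k) = (m : ℝ) - k := by
    intro m k hkm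
    have hkm' : (k : ℝ) ≤ (m : ℝ) := by exact_mod_cast hkm
    rw [stmt15_dist_eq_sup' hn]
    apply le_antisymm
    · apply Finset.sup'_le
      intro j _
      by_cases hj : j ∈ J
      · simp only [hy, if_pos hj]
        rw [← mul_sub, abs_mul, abs_neg, hε1 j hj, one_mul, abs_sub_le_iff]
        constructor
        · have h1 : max ((m : ℝ) - α j) 0 ≤ max ((k : ℝ) - α j) 0 + ((m : ℝ) - k) := by
            apply max_le
            · have he : (m : ℝ) - α j = ((k:ℝ) - α j) + ((m:ℝ) - k) := by ring
              rw [he]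
              have := le_max_left ((k:ℝ) - α j) (0:ℝ)
              linarith
            · have := le_max_right ((k:ℝ) - α j) (0:ℝ)
              linarith
          linarith
        · have h2 : max ((k : ℝ) - α j) 0 ≤ max ((m : ℝ) - α j) 0 := by
            apply max_le _ (le_max_right _ _)
            calc (k:ℝ) - α j ≤ (m:ℝ) - α j := by linarith
              _ ≤ _ := le_max_left _ _
          linarith
      · simp only [hy, if_neg hj, sub_self, abs_zero]
        linarith
    · have hle := Finset.le_sup' (fun j => |y m j - y k j|) (Finset.mem_univ j₀)
      have hval : |y m j₀ - y k j₀| = (m : ℝ) - k := by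
        simp only [hy, if_pos hj₀J, hj₀, sub_zero]
        rw [max_eq_left (Nat.cast_nonneg m), max_eq_left (Nat.cast_nonneg k), ← mul_sub,
          abs_mul, abs_neg, hε1 j₀ hj₀J, one_mul, abs_of_nonneg (by linarith)]
      exact hval.symm.trans_le hle
  have hy0 : y 0 = 0 := by
    funext j
    by_cases hj : j ∈ J
    · simp only [hy, if_pos hj, Nat.cast_zero, zero_sub]
      rw [max_eq_right (by linarith [hα j hj])]
      simp
    · simp [hy, if_neg hj]
  have hlim : HoroLim 0 y h := by
    intro z
    have hev : ∀ᶠ k : ℕ in atTop, horo 0 (y k) z = h z := by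
      have hcond : ∀ᶠ k : ℕ in atTop, ∀ j : Fin n, |α j| + |z j| + |z j₀| + 1 ≤ (k : ℝ) := by
        rw [Filter.eventually_all]
        intro j
        exact tendsto_natCast_atTop_atTop.eventually_ge_atTop _
      filter_upwards [hcond] with k hk'
      have hterm : ∀ j ∈ J, |z j - y k j| = ε j * z j + ((k : ℝ) - α j) := by
        intro j hj
        have hkj := hk' j
        have haj := le_abs_self (α j)
        have hmax : max ((k:ℝ) - α j) 0 = (k:ℝ) - α j := by
          apply max_eq_left; linarith [abs_nonneg (z j), abs_nonneg (z j₀)]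
        simp only [hy, if_pos hj, hmax]
        have heq1 : z j - -ε j * ((k:ℝ) - α j) = ε j * (ε j * z j + ((k:ℝ) - α j)) := by
          linear_combination (-(z j)) * hεsq j hj
        rw [heq1, abs_mul, hε1 j hj, one_mul, abs_of_nonneg]
        have := hεlb j hj (z j)
        linarith [abs_nonneg (z j₀)]
      have htermn : ∀ j : Fin n, j ∉ J → |z j - y k j| = |z j| := by
        intro j hj; simp [hy, if_neg hj]
      have hdz : dist z (y k) = Finset.univ.sup' hn (fun j => |z j - y k j|) := stmt15_dist_eq_sup' hn z (y k)
      have hd0 : dist (0 : Fin n → ℝ) (y k) = (k : ℝ) := by rw [dist_comm]; exact hdist0 k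
      rw [horo, hdz, hd0, ← stmt15_sup'_sub_const hn]
      rw [hh z]
      apply le_antisymm
      · apply Finset.sup'_le
        intro j _
        by_cases hj : j ∈ J
        · rw [hterm j hj]
          have he : ε j * z j + ((k:ℝ) - α j) - k = ε j * z j - α j := by ring
          rw [he]
          exact Finset.le_sup' (fun j => ε j * z j - α j) hj
        · rw [htermn j hj]
          have hb : |z j| - (k:ℝ) ≤ ε j₀ * z j₀ - α j₀ := by
            have h1 := hk' j
            have h2 := hεlb j₀ hj₀J (z j₀)
            have h3 := abs_nonneg (α j)
            rw [hj₀]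
            linarith
          exact le_trans hb (Finset.le_sup' (fun j => ε j * z j - α j) hj₀J)
      · apply Finset.sup'_le
        intro j hj
        have he : ε j * z j - α j = |z j - y k j| - k := by rw [hterm j hj]; ring
        rw [he]
        exact Finset.le_sup' (fun j => |z j - y k j| - (k:ℝ)) (Finset.mem_univ j)
    exact Tendsto.congr' (by filter_upwards [hev] with k hk using hk.symm) tendsto_const_nhds
  have hne : ∀ w : Fin n → ℝ, h ≠ horo 0 w := by
    intro w heq
    set t : ℝ := 2 * dist (0 : Fin n → ℝ) w + 1 with ht
    have ht0 : 0 < t := by positivity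
    set z : Fin n → ℝ := fun j => if j = j₀ then -(t * ε j₀) else 0 with hz
    have hzj0 : z j₀ = -(t * ε j₀) := by simp [hz]
    have hzother : ∀ j : Fin n, j ≠ j₀ → z j = 0 := by intro j hj; simp [hz, hj]
    have hzv : h z ≤ 0 := by
      rw [hh z]
      apply Finset.sup'_le
      intro j hj
      by_cases hjj : j = j₀
      · rw [hjj, hzj0, hj₀]
        have := hεsq j₀ hj₀J
        nlinarith
      · rw [hzother j hjj]
        have := hα j hj
        rw [mul_zero]
        linarith
    have hdz0 : dist z 0 = t := by
      rw [stmt15_dist_eq_sup' hn]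
      apply le_antisymm
      · apply Finset.sup'_le
        intro j _
        by_cases hjj : j = j₀
        · rw [hjj]
          simp only [Pi.zero_apply, sub_zero, hzj0, abs_neg, abs_mul, hε1 j₀ hj₀J,
            mul_one, abs_of_pos ht0]
          exact le_rfl
        · rw [Pi.zero_apply, sub_zero, hzother j hjj, abs_zero]
          linarith
      · have hle := Finset.le_sup' (fun j => |z j - (0 : Fin n → ℝ) j|) (Finset.mem_univ j₀)
        simpa only [Pi.zero_apply, sub_zero, hzj0, abs_neg, abs_mul, hε1 j₀ hj₀J, mul_one,
          abs_of_pos ht0] using hle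
    have hge : horo 0 w z ≥ 1 := by
      rw [horo]
      have h1 : dist z (0 : Fin n → ℝ) ≤ dist z w + dist w 0 := dist_triangle _ _ _
      have h2 : dist w (0 : Fin n → ℝ) = dist 0 w := dist_comm _ _
      rw [hdz0] at h1
      rw [h2] at h1
      linarith
    rw [heq] at hzv
    linarith
  refine ⟨⟨⟨y, hlim⟩, hne⟩, y, ⟨?_, ?_⟩, hlim⟩
  · have hc : ∀ k : ℕ, dist (y k) (y 0) = (k : ℝ) := by
      intro k; rw [hy0]; exact hdist0 k
    rw [show (fun k => dist (y k) (y 0)) = (fun k : ℕ => (k : ℝ)) from funext hc]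
    exact tendsto_natCast_atTop_atTop
  · intro e he
    refine ⟨0, fun m k _ hkm => ?_⟩
    rw [hy0, hdistmk m k hkm, hdist0 m, hdist0 k]
    linarith

lemma stmt15_tendsto_sup'_atBot {ι : Type*} {s : Finset ι} (hs : s.Nonempty) (f : ι → ℕ → ℝ)
    (hf : ∀ i ∈ s, Filter.Tendsto (f i) Filter.atTop Filter.atBot) :
    Filter.Tendsto (fun k => s.sup' hs (fun i => f i k)) Filter.atTop Filter.atBot := by
  rw [tendsto_atBot]
  intro b
  have hball : ∀ i ∈ s, ∀ᶠ k in atTop, f i k ≤ b := fun i hi => (tendsto_atBot.1 (hf i hi)) b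
  rw [← eventually_all_finset] at hball
  exact hball.mono fun k hk => Finset.sup'_le _ _ hk

lemma stmt15_abs_le_dist_zero {n : ℕ} (w : Fin n → ℝ) (j : Fin n) : |w j| ≤ dist (0 : Fin n → ℝ) w := by
  have := dist_le_pi_dist w (0 : Fin n → ℝ) j
  simpa [Real.dist_eq, dist_comm] using this

lemma stmt15_forward {n : ℕ} (h : (Fin n → ℝ) → ℝ) (hhoro : IsHorofunction 0 h) :
    ∃ (J : Finset (Fin n)) (hJ : J.Nonempty) (ε : Fin n → ℝ) (α : Fin n → ℝ),
      (∀ j ∈ J, ε j = 1 ∨ ε j = -1) ∧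
      (∀ j ∈ J, 0 ≤ α j) ∧ (∃ j ∈ J, α j = 0) ∧
      ∀ x : Fin n → ℝ, h x = J.sup' hJ fun j => ε j * x j - α j := by
  classical
  obtain ⟨⟨y, hlim⟩, hneq⟩ := hhoro
  rcases Nat.eq_zero_or_pos n with hn0 | hn
  · -- n = 0 : no horofunctions
    exfalso
    apply hneq 0
    subst hn0
    have hall : ∀ a b : Fin 0 → ℝ, a = b := fun a b => funext fun j => j.elim0
    funext z
    have h2 : ∀ k, horo 0 (y k) z = 0 := by
      intro k
      rw [horo, show dist z (y k) = dist 0 (y k) from by rw [hall z 0], sub_self]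
    have h3 : h z = 0 := by
      refine tendsto_nhds_unique (hlim z) ?_
      rw [show (fun k : ℕ => horo 0 (y k) z) = fun _ => (0:ℝ) from funext h2]
      exact tendsto_const_nhds
    rw [h3, horo, show dist z (0 : Fin 0 → ℝ) = dist 0 (0 : Fin 0 → ℝ) from by rw [hall z 0], sub_self]
  -- n > 0
  have hunn : (Finset.univ : Finset (Fin n)).Nonempty := ⟨⟨0, hn⟩, Finset.mem_univ _⟩
  set R : ℕ → ℝ := fun k => dist 0 (y k) with hRdef
  -- the key sup' formula for horo
  have hhsup : ∀ (k : ℕ) (z : Fin n → ℝ),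
      horo 0 (y k) z = Finset.univ.sup' hunn (fun j => |z j - y k j| - R k) := by
    intro k z
    rw [horo, stmt15_dist_eq_sup' hunn z (y k), stmt15_sup'_sub_const hunn (fun j => |z j - y k j|) (R k)]
  have hhoro0 : ∀ w : Fin n → ℝ, horo 0 w 0 = 0 := fun w => sub_self _
  -- Step A : R tends to infinity
  have hR : Tendsto R atTop atTop := by
    by_contra hcon
    rw [tendsto_atTop] at hcon
    push_neg at hcon
    obtain ⟨b, hb⟩ := hcon
    have hb' : ∃ᶠ k in atTop, R k < b := hb
    obtain ⟨φ, hφmono, hφ⟩ := Filter.extraction_of_frequently_atTop hb'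
    have hmem : ∀ k, y (φ k) ∈ Metric.closedBall (0 : Fin n → ℝ) b := by
      intro k
      rw [Metric.mem_closedBall, dist_comm]
      exact le_of_lt (hφ k)
    obtain ⟨a, -, ψ, hψmono, hψlim⟩ :=
      (isCompact_closedBall (0 : Fin n → ℝ) b).tendsto_subseq hmem
    apply hneq a
    funext z
    have hc : Continuous fun w : Fin n → ℝ => dist z w - dist 0 w :=
      (continuous_const.dist continuous_id).sub (continuous_const.dist continuous_id)
    have h1 : Tendsto (fun k => horo 0 (y (φ (ψ k))) z) atTop (𝓝 (h z)) :=
      (hlim z).comp ((hφmono.comp hψmono).tendsto_atTop)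
    have h2 : Tendsto (fun k => horo 0 (y (φ (ψ k))) z) atTop (𝓝 (horo 0 a z)) :=
      (hc.tendsto a).comp hψlim
    exact tendsto_nhds_unique h1 h2
  -- Step B : compactness extraction in EReal
  set F : ℕ → (Fin n → EReal × EReal) :=
    fun k j => (((y k j : ℝ) : EReal), ((R k - |y k j| : ℝ) : EReal)) with hF
  obtain ⟨L, -, φ, hφmono, hφlim⟩ :=
    (isCompact_univ (X := Fin n → EReal × EReal)).tendsto_subseq (fun k => Set.mem_univ (F k))
  have hRφ : Tendsto (fun k => R (φ k)) atTop atTop := hR.comp hφmono.tendsto_atTop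
  have hlimφ : ∀ z, Tendsto (fun k => horo 0 (y (φ k)) z) atTop (𝓝 (h z)) :=
    fun z => (hlim z).comp hφmono.tendsto_atTop
  have hβlim : ∀ j, Tendsto (fun k => ((y (φ k) j : ℝ) : EReal)) atTop (𝓝 (L j).1) := by
    intro j
    have h1 : Tendsto (fun k => F (φ k) j) atTop (𝓝 (L j)) :=
      ((continuous_apply j).tendsto L).comp hφlim
    exact (continuous_fst.tendsto (L j)).comp h1
  have hαlim : ∀ j, Tendsto (fun k => ((R (φ k) - |y (φ k) j| : ℝ) : EReal)) atTop (𝓝 (L j).2) := by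
    intro j
    have h1 : Tendsto (fun k => F (φ k) j) atTop (𝓝 (L j)) :=
      ((continuous_apply j).tendsto L).comp hφlim
    exact (continuous_snd.tendsto (L j)).comp h1
  set α' : Fin n → EReal := fun j => (L j).2 with hα'def
  have hα'0 : ∀ j, (0 : EReal) ≤ α' j := by
    intro j
    refine ge_of_tendsto (hαlim j) (Filter.Eventually.of_forall fun k => ?_)
    rw [show ((0:EReal) = ((0:ℝ) : EReal)) from rfl, EReal.coe_le_coe_iff]
    have := stmt15_abs_le_dist_zero (y (φ k)) j
    simp only [hRdef]
    linarith
  have hα'bot : ∀ j, α' j ≠ ⊥ := by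
    intro j
    exact ne_of_gt (lt_of_lt_of_le (by simp) (hα'0 j))
  set J : Finset (Fin n) := Finset.univ.filter (fun j => α' j ≠ ⊤) with hJdef
  set α : Fin n → ℝ := fun j => (α' j).toReal with hαdef
  set ε : Fin n → ℝ := fun j => if (L j).1 = ⊤ then (-1 : ℝ) else 1 with hεdef
  -- properties on J
  have hJtop : ∀ j ∈ J, α' j ≠ ⊤ := by
    intro j hj
    exact (Finset.mem_filter.1 hj).2
  have hnJtop : ∀ j : Fin n, j ∉ J → α' j = ⊤ := by
    intro j hj
    by_contra hne
    exact hj (Finset.mem_filter.2 ⟨Finset.mem_univ _, hne⟩)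
  have hαR : ∀ j ∈ J, Tendsto (fun k => R (φ k) - |y (φ k) j|) atTop (𝓝 (α j)) := by
    intro j hj
    rw [← EReal.tendsto_coe]
    have := hαlim j
    rwa [show (((α j : ℝ)) : EReal) = α' j from EReal.coe_toReal (hJtop j hj) (hα'bot j)]
  have habsinf : ∀ j ∈ J, Tendsto (fun k => |y (φ k) j|) atTop atTop := by
    intro j hj
    have he : (fun k => |y (φ k) j|) =
        fun k => R (φ k) + -(R (φ k) - |y (φ k) j|) := by
      funext k; ring
    rw [he]
    exact hRφ.atTop_add ((hαR j hj).neg)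
  -- non-J coordinates escape to -infinity
  have hbot : ∀ j : Fin n, j ∉ J → ∀ z : Fin n → ℝ,
      Tendsto (fun k => |z j - y (φ k) j| - R (φ k)) atTop atBot := by
    intro j hj z
    have htop : Tendsto (fun k => R (φ k) - |y (φ k) j|) atTop atTop := by
      have h1 := hαlim j
      rw [show (L j).2 = α' j from rfl, hnJtop j hj, EReal.tendsto_nhds_top_iff_real] at h1
      rw [tendsto_atTop]
      intro b
      exact (h1 b).mono fun a ha => le_of_lt (by exact_mod_cast ha)
    have hbd : ∀ k, |z j - y (φ k) j| - R (φ k) ≤ |z j| + -(R (φ k) - |y (φ k) j|) := by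
      intro k
      have h1 : |z j - y (φ k) j| ≤ |z j| + |y (φ k) j| := abs_sub _ _
      linarith
    refine tendsto_atBot_mono hbd ?_
    have h2 : Tendsto (fun k => -(R (φ k) - |y (φ k) j|)) atTop atBot :=
      tendsto_neg_atTop_atBot.comp htop
    simpa using (tendsto_atBot_add_const_left atTop (|z j|) h2)
  -- J is nonempty
  have hJne : J.Nonempty := by
    by_contra hJe
    rw [Finset.not_nonempty_iff_eq_empty] at hJe
    have hall : ∀ j : Fin n, j ∉ J := by
      intro j
      rw [hJe]
      exact Finset.notMem_empty j
    have hsup : Tendsto (fun k => Finset.univ.sup' hunn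
        (fun j => |(0 : Fin n → ℝ) j - y (φ k) j| - R (φ k))) atTop atBot :=
      stmt15_tendsto_sup'_atBot hunn _ (fun j _ => hbot j (hall j) 0)
    have hzero : ∀ k, Finset.univ.sup' hunn
        (fun j => |(0 : Fin n → ℝ) j - y (φ k) j| - R (φ k)) = 0 := by
      intro k
      rw [← hhsup (φ k) 0, hhoro0]
    rw [show (fun k => Finset.univ.sup' hunn
        (fun j => |(0 : Fin n → ℝ) j - y (φ k) j| - R (φ k))) = fun _ => (0:ℝ) from funext hzero] at hsup
    exact not_tendsto_const_atBot (0:ℝ) atTop hsup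
  -- signs
  have hβpm : ∀ j ∈ J, (L j).1 = ⊤ ∨ (L j).1 = ⊥ := by
    intro j hj
    by_contra hcon
    push_neg at hcon
    obtain ⟨ht, hb⟩ := hcon
    have hco : (((L j).1.toReal : ℝ) : EReal) = (L j).1 := EReal.coe_toReal ht hb
    have h1 : Tendsto (fun k => y (φ k) j) atTop (𝓝 ((L j).1.toReal)) := by
      rw [← EReal.tendsto_coe]
      rw [hco]
      exact hβlim j
    have h2 : Tendsto (fun k => |y (φ k) j|) atTop (𝓝 |(L j).1.toReal|) :=
      h1.abs
    exact not_tendsto_atTop_of_tendsto_nhds h2 (habsinf j hj)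
  -- the term convergence on J
  have hterm : ∀ j ∈ J, ∀ z : Fin n → ℝ,
      Tendsto (fun k => |z j - y (φ k) j| - R (φ k)) atTop (𝓝 (ε j * z j - α j)) := by
    intro j hj z
    have hsplit : (fun k => |z j - y (φ k) j| - R (φ k)) =
        fun k => (|z j - y (φ k) j| - |y (φ k) j|) - (R (φ k) - |y (φ k) j|) := by
      funext k; ring
    rw [hsplit]
    have hfirst : ∀ᶠ k in atTop, |z j - y (φ k) j| - |y (φ k) j| = ε j * z j := by
      rcases hβpm j hj with hT | hB
      · -- y → +infinity
        have h1 : Tendsto (fun k => y (φ k) j) atTop atTop := by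
          have h2 := hβlim j
          rw [hT, EReal.tendsto_nhds_top_iff_real] at h2
          rw [tendsto_atTop]
          intro b
          exact (h2 b).mono fun a ha => le_of_lt (by exact_mod_cast ha)
        have hev : ∀ᶠ k in atTop, |z j| ≤ y (φ k) j := h1.eventually_ge_atTop _
        filter_upwards [hev] with k hk
        have hz1 : z j ≤ y (φ k) j := le_trans (le_abs_self _) hk
        have hz2 : (0:ℝ) ≤ y (φ k) j := le_trans (abs_nonneg _) hk
        rw [abs_of_nonpos (by linarith), abs_of_nonneg hz2, hεdef]
        simp only [hT, if_pos]
        ring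
      · -- y → -infinity
        have h1 : Tendsto (fun k => y (φ k) j) atTop atBot := by
          have h2 := hβlim j
          rw [hB, EReal.tendsto_nhds_bot_iff_real] at h2
          rw [tendsto_atBot]
          intro b
          exact (h2 b).mono fun a ha => le_of_lt (by exact_mod_cast ha)
        have hev : ∀ᶠ k in atTop, y (φ k) j ≤ -|z j| := h1.eventually_le_atBot _
        filter_upwards [hev] with k hk
        have hz1 : y (φ k) j ≤ z j := le_trans hk (by linarith [neg_abs_le (z j)])
        have hz2 : y (φ k) j ≤ 0 := le_trans hk (by linarith [abs_nonneg (z j)])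
        rw [abs_of_nonneg (by linarith), abs_of_nonpos hz2, hεdef]
        have hne' : (L j).1 ≠ ⊤ := by rw [hB]; exact bot_ne_top
        simp only [if_neg hne']
        ring
    have hfst : Tendsto (fun k => |z j - y (φ k) j| - |y (φ k) j|) atTop (𝓝 (ε j * z j)) :=
      Tendsto.congr' (by filter_upwards [hfirst] with k hk using hk.symm) tendsto_const_nhds
    exact hfst.sub (hαR j hj)
  -- main convergence
  have hmain : ∀ z : Fin n → ℝ, h z = J.sup' hJne (fun j => ε j * z j - α j) := by
    intro z
    set Tm : Fin n → ℕ → ℝ := fun j k => |z j - y (φ k) j| - R (φ k) with hTm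
    set Lz : ℝ := J.sup' hJne (fun j => ε j * z j - α j) with hLz
    have hTJ : Tendsto (fun k => J.sup' hJne (fun j => Tm j k)) atTop (𝓝 Lz) :=
      Tendsto.finset_sup'_nhds_apply hJne (fun j hj => hterm j hj z)
    have hevJ : ∀ᶠ k in atTop, Lz - 1 < J.sup' hJne (fun j => Tm j k) :=
      hTJ.eventually (eventually_gt_nhds (by linarith))
    have hevK : ∀ᶠ k in atTop, ∀ j : Fin n, j ∉ J → Tm j k ≤ Lz - 1 := by
      rw [Filter.eventually_all]
      intro j
      by_cases hj : j ∈ J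
      · exact Filter.Eventually.of_forall fun k hj' => absurd hj hj'
      · have := (hbot j hj z).eventually_le_atBot (Lz - 1)
        filter_upwards [this] with k hk _
        exact hk
    have hev : ∀ᶠ k in atTop, Finset.univ.sup' hunn (fun j => Tm j k)
        = J.sup' hJne (fun j => Tm j k) := by
      filter_upwards [hevJ, hevK] with k h1 h2
      apply le_antisymm
      · apply Finset.sup'_le
        intro j _
        by_cases hj : j ∈ J
        · exact Finset.le_sup' (fun j => Tm j k) hj
        · exact le_trans (h2 j hj) (by linarith)
      · apply Finset.sup'_le
        intro j hj
        exact Finset.le_sup' (fun j => Tm j k) (Finset.mem_univ j)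
    have hT2 : Tendsto (fun k => Finset.univ.sup' hunn (fun j => Tm j k)) atTop (𝓝 Lz) :=
      Tendsto.congr' (by filter_upwards [hev] with k hk using hk.symm) hTJ
    have hT3 : Tendsto (fun k => horo 0 (y (φ k)) z) atTop (𝓝 Lz) := by
      have he : (fun k => horo 0 (y (φ k)) z) = fun k => Finset.univ.sup' hunn (fun j => Tm j k) :=
        funext fun k => hhsup (φ k) z
      rw [he]
      exact hT2
    exact tendsto_nhds_unique (hlimφ z) hT3
  -- conclusion
  refine ⟨J, hJne, ε, α, ?_, ?_, ?_, hmain⟩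
  · intro j _
    rw [hεdef]
    by_cases hT : (L j).1 = ⊤
    · simp [hT]
    · simp [hT]
  · intro j hj
    have := EReal.toReal_le_toReal (hα'0 j) (by simp) (hJtop j hj)
    simpa using this
  · have h0 : h 0 = 0 := by
      refine tendsto_nhds_unique (hlim 0) ?_
      have he : (fun k => horo 0 (y k) 0) = fun _ => (0:ℝ) := funext fun k => hhoro0 (y k)
      rw [he]
      exact tendsto_const_nhds
    have h1 := hmain 0
    rw [h0] at h1
    obtain ⟨j, hjJ, hje⟩ := Finset.exists_mem_eq_sup' hJne (fun j => ε j * (0 : Fin n → ℝ) j - α j)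
    refine ⟨j, hjJ, ?_⟩
    rw [← h1] at hje
    simp only [Pi.zero_apply, mul_zero, zero_sub] at hje
    linarith [hje]


/-- horofunctions of (ℝ^n, d_∞) with basepoint 0 are exactly the functions
x ↦ max_{j∈J} (ε_j x_j − α_j) with J ≠ ∅, ε_j ∈ {±1}, min_{j∈J} α_j = 0; all are Busemann. -/
theorem stmt_15 (n : ℕ) :
    (∀ h : (Fin n → ℝ) → ℝ,
      IsHorofunction (0 : Fin n → ℝ) h ↔
        ∃ (J : Finset (Fin n)) (hJ : J.Nonempty) (ε : Fin n → ℝ) (α : Fin n → ℝ),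
          (∀ j ∈ J, ε j = 1 ∨ ε j = -1) ∧
          (∀ j ∈ J, 0 ≤ α j) ∧ (∃ j ∈ J, α j = 0) ∧
          ∀ x : Fin n → ℝ, h x = J.sup' hJ fun j => ε j * x j - α j) ∧
    (∀ h : (Fin n → ℝ) → ℝ, IsHorofunction (0 : Fin n → ℝ) h →
      IsBusemannPoint (0 : Fin n → ℝ) h) := by
  constructor
  · intro h
    constructor
    · exact stmt15_forward h
    · rintro ⟨J, hJ, ε, α, h1, h2, h3, h4⟩
      exact (stmt15_backward h J hJ ε α h1 h2 h3 h4).1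
  · intro h hh
    obtain ⟨J, hJ, ε, α, h1, h2, h3, h4⟩ := stmt15_forward h hh
    exact stmt15_backward h J hJ ε α h1 h2 h3 h4
end
end

section
/- Let p > n ≥ 1. There is no map φ : ℝ^p → ℝ^n such that max_{1≤j≤n}(φ(x)_j − φ(y)_j) + max_{1≤j≤n}(φ(y)_j − φ(x)_j) = max_{1≤i≤p}(x_i − y_i) + max_{1≤i≤p}(y_i − x_i) for all x, y ∈ ℝ^p. Equivalently, there is no isometric embedding of the quotient normed space (ℝ^p/Sp(𝟏), ‖·‖_var) into (ℝ^n/Sp(𝟏), ‖·‖_var). -/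
open Filter MeasureTheory Asymptotics

/-- variation pseudodistance -/
noncomputable def dvar {m : ℕ} (hm : (Finset.univ : Finset (Fin m)).Nonempty)
    (x y : Fin m → ℝ) : ℝ :=
  (Finset.univ.sup' hm fun j => x j - y j) + (Finset.univ.sup' hm fun j => y j - x j)

lemma dvar_le_two_norm {m : ℕ} (hm : (Finset.univ : Finset (Fin m)).Nonempty)
    (x y : Fin m → ℝ) : dvar hm x y ≤ 2 * ‖x - y‖ := by
  have h1 : ∀ j : Fin m, x j - y j ≤ ‖x - y‖ := by
    intro j
    have := norm_le_pi_norm (x - y) j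
    have : |x j - y j| ≤ ‖x - y‖ := by simpa [Real.norm_eq_abs] using this
    exact (le_abs_self _).trans this
  have h2 : ∀ j : Fin m, y j - x j ≤ ‖x - y‖ := by
    intro j
    have := norm_le_pi_norm (x - y) j
    have h : |x j - y j| ≤ ‖x - y‖ := by simpa [Real.norm_eq_abs] using this
    have := (neg_abs_le (x j - y j)).trans (le_abs_self _)
    nlinarith [abs_nonneg (x j - y j), neg_abs_le (x j - y j), le_abs_self (y j - x j),
      abs_sub_comm (x j) (y j)]
  have s1 : (Finset.univ.sup' hm fun j => x j - y j) ≤ ‖x - y‖ :=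
    Finset.sup'_le _ _ fun j _ => h1 j
  have s2 : (Finset.univ.sup' hm fun j => y j - x j) ≤ ‖x - y‖ :=
    Finset.sup'_le _ _ fun j _ => h2 j
  unfold dvar; linarith

lemma norm_le_dvar {m : ℕ} (hm : (Finset.univ : Finset (Fin m)).Nonempty)
    (x y : Fin m → ℝ) (j0 : Fin m) (h0 : x j0 = y j0) : ‖x - y‖ ≤ dvar hm x y := by
  have hs1 : (0:ℝ) ≤ Finset.univ.sup' hm fun j => x j - y j := by
    have := Finset.le_sup' (fun j => x j - y j) (Finset.mem_univ j0)
    simp only [h0, sub_self] at this; exact this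
  have hs2 : (0:ℝ) ≤ Finset.univ.sup' hm fun j => y j - x j := by
    have := Finset.le_sup' (fun j => y j - x j) (Finset.mem_univ j0)
    simp only [h0, sub_self] at this; exact this
  have hd0 : (0:ℝ) ≤ dvar hm x y := by unfold dvar; linarith
  rw [pi_norm_le_iff_of_nonneg hd0]
  intro j
  rw [Real.norm_eq_abs, abs_le]
  constructor
  · have h2 := Finset.le_sup' (fun j => y j - x j) (Finset.mem_univ j)
    unfold dvar; simp only [Pi.sub_apply]; linarith
  · have h1 := Finset.le_sup' (fun j => x j - y j) (Finset.mem_univ j)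
    unfold dvar; simp only [Pi.sub_apply]; linarith

lemma sup'_sub_const_s17 {m : ℕ} (hm : (Finset.univ : Finset (Fin m)).Nonempty)
    (w : Fin m → ℝ) (c : ℝ) :
    (Finset.univ.sup' hm fun j => w j - c) = (Finset.univ.sup' hm w) - c := by
  apply le_antisymm
  · apply Finset.sup'_le
    intro j _
    have := Finset.le_sup' w (Finset.mem_univ j)
    linarith
  · have : Finset.univ.sup' hm w ≤ (Finset.univ.sup' hm fun j => w j - c) + c := by
      apply Finset.sup'_le
      intro j _
      have := Finset.le_sup' (fun j => w j - c) (Finset.mem_univ j)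
      linarith
    linarith

lemma dvar_shift {m : ℕ} (hm : (Finset.univ : Finset (Fin m)).Nonempty)
    (x y : Fin m → ℝ) (a b : ℝ) :
    dvar hm (fun j => x j - a) (fun j => y j - b) = dvar hm x y := by
  unfold dvar
  have h1 : (Finset.univ.sup' hm fun j => (x j - a) - (y j - b))
      = (Finset.univ.sup' hm fun j => x j - y j) - (a - b) := by
    have := sup'_sub_const_s17 hm (fun j => x j - y j) (a - b)
    rw [← this]
    congr 1; funext j; ring
  have h2 : (Finset.univ.sup' hm fun j => (y j - b) - (x j - a))
      = (Finset.univ.sup' hm fun j => y j - x j) - (b - a) := by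
    have := sup'_sub_const_s17 hm (fun j => y j - x j) (b - a)
    rw [← this]
    congr 1; funext j; ring
  rw [h1, h2]; ring

/-- for p > n ≥ 1 there is no isometric embedding of
(ℝ^p/Sp(1), ‖·‖_var) into (ℝ^n/Sp(1), ‖·‖_var), phrased via the variation
pseudometric d_var(x,y) = max_j (x_j − y_j) + max_j (y_j − x_j). -/
theorem stmt_17 (p n : ℕ) (hn : 1 ≤ n) (hpn : n < p) :
    ¬ ∃ φ : (Fin p → ℝ) → (Fin n → ℝ),
      ∀ x y : Fin p → ℝ,
        (Finset.univ.sup' (Finset.univ_nonempty_iff.mpr (Fin.pos_iff_nonempty.mp hn))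
            fun j => φ x j - φ y j) +
        (Finset.univ.sup' (Finset.univ_nonempty_iff.mpr (Fin.pos_iff_nonempty.mp hn))
            fun j => φ y j - φ x j) =
        (Finset.univ.sup'
            (Finset.univ_nonempty_iff.mpr
              (Fin.pos_iff_nonempty.mp (lt_of_le_of_lt (Nat.zero_le n) hpn)))
            fun i => x i - y i) +
        (Finset.univ.sup'
            (Finset.univ_nonempty_iff.mpr
              (Fin.pos_iff_nonempty.mp (lt_of_le_of_lt (Nat.zero_le n) hpn)))
            fun i => y i - x i) := by
  rintro ⟨φ, hφ⟩
  haveI : NeZero n := ⟨by omega⟩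
  set hne_n : (Finset.univ : Finset (Fin n)).Nonempty :=
    Finset.univ_nonempty_iff.mpr (Fin.pos_iff_nonempty.mp hn) with hhn
  set hne_p : (Finset.univ : Finset (Fin p)).Nonempty :=
    Finset.univ_nonempty_iff.mpr
      (Fin.pos_iff_nonempty.mp (lt_of_le_of_lt (Nat.zero_le n) hpn)) with hhp
  have hφ' : ∀ x y, dvar hne_n (φ x) (φ y) = dvar hne_p x y := hφ
  -- the padding map
  set L : (Fin n → ℝ) → (Fin p → ℝ) :=
    fun z i => if h : (i : ℕ) < n then z ⟨i, h⟩ else 0 with hLdef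
  have hL_norm : ∀ z z' : Fin n → ℝ, ‖L z - L z'‖ ≤ ‖z - z'‖ := by
    intro z z'
    rw [pi_norm_le_iff_of_nonneg (norm_nonneg _)]
    intro i
    by_cases h : (i : ℕ) < n
    · simp only [hLdef, Pi.sub_apply, dif_pos h]
      exact norm_le_pi_norm (z - z') ⟨i, h⟩
    · simp [hLdef, dif_neg h]
  have hL_low : ∀ z z' : Fin n → ℝ, ‖z - z'‖ ≤ dvar hne_p (L z) (L z') := by
    intro z z'
    have h1 : ‖z - z'‖ ≤ ‖L z - L z'‖ := by
      rw [pi_norm_le_iff_of_nonneg (norm_nonneg _)]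
      intro j
      have : (L z - L z') ⟨(j : ℕ), lt_trans j.isLt hpn⟩ = z j - z' j := by
        simp [hLdef, j.isLt]
      calc ‖(z - z') j‖ = ‖(L z - L z') ⟨(j : ℕ), lt_trans j.isLt hpn⟩‖ := by
            rw [this]; simp
        _ ≤ ‖L z - L z'‖ := norm_le_pi_norm _ _
    refine h1.trans (norm_le_dvar hne_p _ _ ⟨n, hpn⟩ ?_)
    simp [hLdef]
  -- the induced map
  set f : (Fin n → ℝ) → (Fin n → ℝ) := fun z j => φ (L z) j - φ (L z) 0 with hfdef
  have hf0 : ∀ z, f z 0 = 0 := by intro z; simp [hfdef]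
  have hiso : ∀ z z', dvar hne_n (f z) (f z') = dvar hne_p (L z) (L z') := by
    intro z z'
    have : f z = fun j => φ (L z) j - φ (L z) 0 := rfl
    calc dvar hne_n (f z) (f z')
        = dvar hne_n (φ (L z)) (φ (L z')) := dvar_shift _ _ _ _ _
      _ = dvar hne_p (L z) (L z') := hφ' _ _
  have hlip : LipschitzWith 2 f := by
    apply LipschitzWith.of_dist_le_mul
    intro z z'
    rw [dist_eq_norm, dist_eq_norm]
    have h1 : ‖f z - f z'‖ ≤ dvar hne_n (f z) (f z') :=
      norm_le_dvar hne_n _ _ 0 (by rw [hf0, hf0])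
    have h2 := hiso z z'
    have h3 := (dvar_le_two_norm hne_p (L z) (L z')).trans
      (by linarith [hL_norm z z'] : 2 * ‖L z - L z'‖ ≤ 2 * ‖z - z'‖)
    push_cast
    linarith
  -- Rademacher
  have hvol : (volume : Measure (Fin n → ℝ)) ≠ 0 := by
    intro h
    have := isOpen_univ.measure_pos (volume : Measure (Fin n → ℝ)) Set.univ_nonempty
    simp [h] at this
  haveI : (MeasureTheory.ae (volume : Measure (Fin n → ℝ))).NeBot := ae_neBot.2 hvol
  obtain ⟨z₀, hz₀⟩ := (hlip.ae_differentiableAt (μ := volume)).exists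
  set T := fderiv ℝ f z₀ with hTdef
  have hT : HasFDerivAt f T z₀ := hz₀.hasFDerivAt
  -- range of T is in the hyperplane
  have hT0 : ∀ v, T v 0 = 0 := by
    intro v
    have h1 : HasFDerivAt (fun z => f z 0)
        ((ContinuousLinearMap.proj 0 : (Fin n → ℝ) →L[ℝ] ℝ).comp T) z₀ :=
      (ContinuousLinearMap.proj (R := ℝ) (φ := fun _ : Fin n => ℝ)
        0).hasFDerivAt.comp z₀ hT
    have h2 : (fun z => f z 0) = fun _ : Fin n → ℝ => (0:ℝ) := funext hf0
    rw [h2] at h1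
    have h3 := h1.unique (hasFDerivAt_const 0 z₀)
    have := congrFun (congrArg (fun (A : (Fin n → ℝ) →L[ℝ] ℝ) => (A : (Fin n → ℝ) → ℝ)) h3) v
    simpa using this
  -- T is injective
  have hTinj : Function.Injective T := by
    intro a b hab
    rw [← sub_eq_zero]
    by_contra hv
    set v := a - b with hvdef
    have hTv : T v = 0 := by rw [hvdef, map_sub, hab, sub_self]
    have hvpos : 0 < ‖v‖ := norm_pos_iff.2 hv
    have hline : HasDerivAt (fun t : ℝ => f (z₀ + t • v)) (T v) 0 := by
      have h1 : HasDerivAt (fun t : ℝ => z₀ + t • v) v 0 := by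
        simpa using ((hasDerivAt_id (0:ℝ)).smul_const v).const_add z₀
      have h2 : HasFDerivAt f T (z₀ + (0:ℝ) • v) := by simpa using hT
      exact h2.comp_hasDerivAt 0 h1
    rw [hTv] at hline
    have hlittle : (fun t : ℝ => f (z₀ + t • v) - f z₀) =o[nhds (0:ℝ)] fun t => t := by
      have := hasDerivAt_iff_isLittleO.1 hline
      simpa using this
    have hbound := hlittle.def (show (0:ℝ) < ‖v‖/4 by positivity)
    obtain ⟨δ, hδ, hball⟩ := Metric.eventually_nhds_iff.1 hbound
    set t := δ / 2 with htdef
    have ht : dist t (0:ℝ) < δ := by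
      rw [Real.dist_eq, sub_zero, htdef, abs_of_pos (by linarith)]
      linarith
    have hb := hball ht
    have hlow : ‖v‖ * |t| ≤ 2 * ‖f (z₀ + t • v) - f z₀‖ := by
      have e1 : ‖(z₀ + t • v) - z₀‖ = ‖v‖ * |t| := by
        simp [norm_smul, Real.norm_eq_abs, mul_comm]
      calc ‖v‖ * |t| = ‖(z₀ + t • v) - z₀‖ := e1.symm
        _ ≤ dvar hne_p (L (z₀ + t • v)) (L z₀) := hL_low _ _
        _ = dvar hne_n (f (z₀ + t • v)) (f z₀) := (hiso _ _).symm
        _ ≤ 2 * ‖f (z₀ + t • v) - f z₀‖ := dvar_le_two_norm _ _ _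
    have htabs : |t| = t := abs_of_pos (by rw [htdef]; linarith)
    rw [Real.norm_eq_abs] at hb
    nlinarith [hb, hlow, hvpos, (by rw [htdef]; linarith : (0:ℝ) < t)]
  -- conclude via dimension
  have hTinj' : Function.Injective (T : (Fin n → ℝ) →ₗ[ℝ] (Fin n → ℝ)) := hTinj
  have hsurj : Function.Surjective (T : (Fin n → ℝ) →ₗ[ℝ] (Fin n → ℝ)) :=
    LinearMap.injective_iff_surjective.1 hTinj'
  obtain ⟨v, hv⟩ := hsurj (Pi.single 0 1)
  have h1 : T v 0 = (1:ℝ) := by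
    have : T v = Pi.single 0 1 := hv
    rw [this, Pi.single_eq_same]
  rw [hT0 v] at h1
  exact zero_ne_one h1
end

section
/- Let n ≥ 1 and let B = {z ∈ ℂ^n : ‖z‖ < 1} be the open Euclidean unit ball, where ‖·‖ and ⟨z,w⟩ = Σ_i z_i conj(w_i) denote the Euclidean norm and the Hermitian inner product on ℂ^n. For z, w ∈ B define k(z,w) = log [ (|1 − ⟨z,w⟩| + (|1 − ⟨z,w⟩|² − (1 − ‖z‖²)(1 − ‖w‖²))^{1/2})² / ((1 − ‖z‖²)(1 − ‖w‖²)) ] (this is the Kobayashi distance of the ball; in particular k(0,w) = log((1+‖w‖)²/(1−‖w‖²))). If (w^n) is a sequence in B converging in norm to a point ξ with ‖ξ‖ = 1, then for every z ∈ B one has k(z, w^n) − k(0, w^n) → log( |1 − ⟨z,ξ⟩|² / (1 − ‖z‖²) ) as n → ∞. -/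
open scoped ComplexInnerProductSpace

noncomputable section

/-- The Kobayashi distance of the Euclidean unit ball in ℂⁿ, via the explicit formula
(here `⟪w, z⟫ = Σᵢ zᵢ conj(wᵢ)` is the paper's Hermitian inner product `⟨z,w⟩`). -/
def kball {n : ℕ} (z w : EuclideanSpace ℂ (Fin n)) : ℝ :=
  Real.log
    (((‖1 - ⟪w, z⟫‖ +
        Real.sqrt ((‖1 - ⟪w, z⟫‖) ^ 2 - (1 - ‖z‖ ^ 2) * (1 - ‖w‖ ^ 2))) ^ 2) /
      ((1 - ‖z‖ ^ 2) * (1 - ‖w‖ ^ 2)))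

/-- if wⁿ → ξ with ‖ξ‖ = 1, then for every z in the ball
k(z,wⁿ) − k(0,wⁿ) → log(|1 − ⟨z,ξ⟩|² / (1 − ‖z‖²)). -/
theorem stmt_18 (n : ℕ) (hn : 1 ≤ n)
    (w : ℕ → EuclideanSpace ℂ (Fin n)) (hw : ∀ k, ‖w k‖ < 1)
    (ξ : EuclideanSpace ℂ (Fin n)) (hξ : ‖ξ‖ = 1)
    (hwξ : Filter.Tendsto w Filter.atTop (nhds ξ)) :
    ∀ z : EuclideanSpace ℂ (Fin n), ‖z‖ < 1 →
      Filter.Tendsto (fun k => kball z (w k) - kball 0 (w k)) Filter.atTop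
        (nhds (Real.log ((‖1 - ⟪ξ, z⟫‖) ^ 2 / (1 - ‖z‖ ^ 2)))) := by
  intro z hz
  set B : ℝ := 1 - ‖z‖ ^ 2 with hBdef
  have hBpos : 0 < B := by
    have := norm_nonneg z
    nlinarith
  set A : ℕ → ℝ := fun k => ‖1 - ⟪w k, z⟫‖ with hAdef
  set C : ℕ → ℝ := fun k => 1 - ‖w k‖ ^ 2 with hCdef
  set A₀ : ℝ := ‖1 - ⟪ξ, z⟫‖ with hA0def
  -- positivity of A₀ and A k
  have habs : ∀ (u : EuclideanSpace ℂ (Fin n)), ‖u‖ ≤ 1 →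
      1 - ‖z‖ ≤ ‖1 - ⟪u, z⟫‖ := by
    intro u hu
    have h1 : ‖⟪u, z⟫‖ ≤ ‖u‖ * ‖z‖ := norm_inner_le_norm u z
    have h2 : ‖(1 : ℂ)‖ - ‖⟪u, z⟫‖ ≤ ‖(1 : ℂ) - ⟪u, z⟫‖ := norm_sub_norm_le _ _
    have h3 : ‖u‖ * ‖z‖ ≤ 1 * ‖z‖ := by
      apply mul_le_mul_of_nonneg_right hu (norm_nonneg z)
    simp only [norm_one] at h2
    linarith
  have hA0pos : 0 < A₀ := lt_of_lt_of_le (by linarith) (habs ξ hξ.le)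
  have hApos : ∀ k, 0 < A k := fun k =>
    lt_of_lt_of_le (by linarith [hw k]) (habs (w k) (hw k).le)
  have hCpos : ∀ k, 0 < C k := by
    intro k
    have := hw k
    have := norm_nonneg (w k)
    simp only [hCdef]
    nlinarith
  -- convergence of A and C
  have hA : Filter.Tendsto A Filter.atTop (nhds A₀) := by
    have h1 : Filter.Tendsto (fun k => ⟪w k, z⟫) Filter.atTop (nhds ⟪ξ, z⟫) :=
      hwξ.inner tendsto_const_nhds
    have h2 := ((tendsto_const_nhds : Filter.Tendsto (fun _ : ℕ => (1 : ℂ)) Filter.atTop (nhds 1)).sub h1).norm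
    simpa only [hAdef] using h2
  have hC : Filter.Tendsto C Filter.atTop (nhds 0) := by
    have h1 := hwξ.norm
    have h2 : Filter.Tendsto (fun k => 1 - ‖w k‖ ^ 2) Filter.atTop (nhds (1 - ‖ξ‖ ^ 2)) :=
      tendsto_const_nhds.sub (h1.pow 2)
    rw [hξ] at h2
    simpa using h2
  -- key identity per k
  have key : ∀ k, kball z (w k) - kball 0 (w k) =
      Real.log ((A k + Real.sqrt ((A k) ^ 2 - B * C k)) ^ 2 /
        (B * (1 + Real.sqrt (1 - C k)) ^ 2)) := by
    intro k
    have hs1 : 0 ≤ Real.sqrt ((A k) ^ 2 - B * C k) := Real.sqrt_nonneg _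
    have hs2 : 0 ≤ Real.sqrt (1 - C k) := Real.sqrt_nonneg _
    have hX : 0 < (A k + Real.sqrt ((A k) ^ 2 - B * C k)) ^ 2 :=
      pow_pos (by linarith [hApos k]) 2
    have hY : 0 < (1 + Real.sqrt (1 - C k)) ^ 2 := pow_pos (by linarith) 2
    have hCk := hCpos k
    have e1 : kball z (w k) =
        Real.log ((A k + Real.sqrt ((A k) ^ 2 - B * C k)) ^ 2 / (B * C k)) := rfl
    have e2 : kball 0 (w k) = Real.log ((1 + Real.sqrt (1 - C k)) ^ 2 / C k) := by
      simp only [kball, inner_zero_right, sub_zero, map_one, norm_one, norm_zero, one_pow,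
        ne_eq, OfNat.ofNat_ne_zero, not_false_eq_true, zero_pow, one_mul, one_pow]
      rfl
    rw [e1, e2, Real.log_div (ne_of_gt hX) (by positivity),
      Real.log_div (ne_of_gt hY) (ne_of_gt hCk),
      Real.log_div (ne_of_gt hX) (by positivity),
      Real.log_mul (ne_of_gt hBpos) (ne_of_gt hCk),
      Real.log_mul (ne_of_gt hBpos) (ne_of_gt hY)]
    ring
  -- limit of the combined expression
  have hlim : Filter.Tendsto
      (fun k => (A k + Real.sqrt ((A k) ^ 2 - B * C k)) ^ 2 /
        (B * (1 + Real.sqrt (1 - C k)) ^ 2)) Filter.atTop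
      (nhds ((A₀ + Real.sqrt (A₀ ^ 2 - B * 0)) ^ 2 / (B * (1 + Real.sqrt (1 - 0)) ^ 2))) := by
    have t1 : Filter.Tendsto (fun k => (A k) ^ 2 - B * C k) Filter.atTop
        (nhds (A₀ ^ 2 - B * 0)) := (hA.pow 2).sub (tendsto_const_nhds.mul hC)
    have t2 : Filter.Tendsto (fun k => 1 - C k) Filter.atTop (nhds (1 - 0)) :=
      tendsto_const_nhds.sub hC
    have tB : Filter.Tendsto (fun _ : ℕ => B) Filter.atTop (nhds B) := tendsto_const_nhds
    have t1c : Filter.Tendsto (fun _ : ℕ => (1 : ℝ)) Filter.atTop (nhds 1) := tendsto_const_nhds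
    have t3 := ((hA.add t1.sqrt).pow 2).div (tB.mul ((t1c.add t2.sqrt).pow 2)) ?_
    · exact t3
    · have : Real.sqrt (1 - 0) = 1 := by simp
      rw [this]
      positivity
  have hval : (A₀ + Real.sqrt (A₀ ^ 2 - B * 0)) ^ 2 / (B * (1 + Real.sqrt (1 - 0)) ^ 2)
      = A₀ ^ 2 / B := by
    rw [mul_zero, sub_zero, sub_zero, Real.sqrt_one, Real.sqrt_sq hA0pos.le]
    field_simp
  rw [hval] at hlim
  have hfinal := hlim.log (by positivity)
  simp only [key]
  exact hfinal
end
end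

section
/- Let n ≥ 1 and let B = {z ∈ ℂ^n : ‖z‖ < 1} be the open Euclidean unit ball. Let ξ, η ∈ ℂ^n with ‖ξ‖ = ‖η‖ = 1 and ξ ≠ η. Then log( (1 + ‖z‖)/(1 − ‖z‖) ) + log( |1 − ⟨z,ξ⟩|² / (1 − ‖z‖²) ) tends to +∞ as z → η with z ∈ B. (This is the computation showing that distinct horofunctions h_ξ ≠ h_η of the ball with the Kobayashi distance are at infinite detour distance.) -/
open scoped ComplexInnerProductSpace

/-- for ξ ≠ η on the unit sphere of ℂⁿ,
log((1+‖z‖)/(1−‖z‖)) + log(|1 − ⟨z,ξ⟩|²/(1−‖z‖²)) → ∞ as z → η inside the ball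
(here `⟪ξ, z⟫ = Σᵢ zᵢ conj(ξᵢ)` is the paper's `⟨z,ξ⟩`). -/
theorem stmt_19 (n : ℕ) (hn : 1 ≤ n)
    (ξ η : EuclideanSpace ℂ (Fin n)) (hξ : ‖ξ‖ = 1) (hη : ‖η‖ = 1) (hne : ξ ≠ η) :
    Filter.Tendsto
      (fun z : EuclideanSpace ℂ (Fin n) =>
        Real.log ((1 + ‖z‖) / (1 - ‖z‖)) +
          Real.log ((‖1 - ⟪ξ, z⟫‖) ^ 2 / (1 - ‖z‖ ^ 2)))
      (nhdsWithin η {z : EuclideanSpace ℂ (Fin n) | ‖z‖ < 1}) Filter.atTop := by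
  set l := nhdsWithin η {z : EuclideanSpace ℂ (Fin n) | ‖z‖ < 1} with hl
  set A : EuclideanSpace ℂ (Fin n) → ℝ := fun z => (‖1 - ⟪ξ, z⟫‖) ^ 2 with hA
  have hinnerne : ⟪ξ, η⟫ ≠ 1 := fun h => hne ((inner_eq_one_iff_of_norm_eq_one hξ hη).mp h)
  have hcpos : 0 < A η := by
    have : (1 : ℂ) - ⟪ξ, η⟫ ≠ 0 := sub_ne_zero.mpr (Ne.symm hinnerne)
    have := norm_pos_iff.mpr this
    positivity
  have hAcont : Filter.Tendsto A l (nhds (A η)) := by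
    apply Filter.Tendsto.mono_left _ nhdsWithin_le_nhds
    exact ((continuous_norm.comp
      (continuous_const.sub (continuous_const.inner continuous_id))).pow 2).tendsto η
  -- 1 - ‖z‖ → 0 from the right
  have h1r : Filter.Tendsto (fun z : EuclideanSpace ℂ (Fin n) => 1 - ‖z‖) l
      (nhdsWithin 0 (Set.Ioi 0)) := by
    apply tendsto_nhdsWithin_of_tendsto_nhds_of_eventually_within
    · have : Filter.Tendsto (fun z : EuclideanSpace ℂ (Fin n) => 1 - ‖z‖) (nhds η)
          (nhds (1 - ‖η‖)) := (continuous_const.sub continuous_norm).tendsto η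
      rw [hη, sub_self] at this
      exact this.mono_left nhdsWithin_le_nhds
    · filter_upwards [self_mem_nhdsWithin] with z hz
      have hz' : ‖z‖ < 1 := hz
      exact Set.mem_Ioi.mpr (by linarith)
  have hlogbot : Filter.Tendsto (fun z : EuclideanSpace ℂ (Fin n) => Real.log (1 - ‖z‖)) l
      Filter.atBot := Real.tendsto_log_nhdsGT_zero.comp h1r
  have htop : Filter.Tendsto (fun z : EuclideanSpace ℂ (Fin n) => -(2 * Real.log (1 - ‖z‖))) l
      Filter.atTop := by
    apply Filter.tendsto_neg_atBot_atTop.comp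
    exact hlogbot.const_mul_atBot (by norm_num : (0:ℝ) < 2)
  have hlogA : Filter.Tendsto (fun z => Real.log (A z)) l (nhds (Real.log (A η))) :=
    (Real.continuousAt_log hcpos.ne').tendsto.comp hAcont
  have hmain : Filter.Tendsto
      (fun z : EuclideanSpace ℂ (Fin n) => Real.log (A z) + -(2 * Real.log (1 - ‖z‖))) l
      Filter.atTop := hlogA.add_atTop htop
  apply hmain.congr'
  filter_upwards [self_mem_nhdsWithin, hAcont.eventually (eventually_gt_nhds hcpos)]
    with z hz hAz
  have hz' : ‖z‖ < 1 := hz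
  have hr0 : (0:ℝ) ≤ ‖z‖ := norm_nonneg z
  have h1 : (0:ℝ) < 1 - ‖z‖ := by linarith [hz']
  have h2 : (0:ℝ) < 1 + ‖z‖ := by linarith [hz']
  have hsq : (1:ℝ) - ‖z‖ ^ 2 = (1 - ‖z‖) * (1 + ‖z‖) := by ring
  rw [Real.log_div h2.ne' h1.ne', Real.log_div hAz.ne' (by rw [hsq]; positivity), hsq,
    Real.log_mul h1.ne' h2.ne']
  ring
end
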